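/- arXiv:2303.16157 — 2 statements merged into one kernel-verified Lean document; each statement's English description precedes it below -/
import Mathlib

section
/- There is an absolute constant C such that for every δ > 0 there is N ∈ ℕ with the following property. Let G be a finite abelian group (written additively) of order n ≥ N, let k be an integer with 3 ≤ k ≤ (log n)^{10}, let p be a real with n^{−1/700} ≤ p ≤ 1, and let R₁, R₂ be independent p-random subsets of G. Then with probability at least 1 − δ both of the following hold. (1) For every U ⊆ G with |U| ≤ p^{300}·n/C, all u, v ∈ G, and every integer k' with 2 ≤ k' ≤ k: if u ≠ v, there exist elements x₀ = u, x₁, …, x_{k'} = v, pairwise distinct, with x₁,…,x_{k'−1} ∈ R₁ ∖ U, such that the k' colours x_{i−1} − x_i (1 ≤ i ≤ k') are pairwise distinct and lie in R₂ ∖ U; if u = v and k' ≥ 3, there exist pairwise distinct elements x₀ = v, x₁, …, x_{k'−1} with x₁,…,x_{k'−1} ∈ R₁ ∖ U such that, setting x_{k'} = v, the k' colours x_{i−1} − x_i are pairwise distinct and lie in R₂ ∖ U. (2) For every U ⊆ G with |U| ≤ p^{300}·n/(4C) and every V ⊆ G with |V| ≤ p^{300}·n/(4kC), there is a family of |V|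 sequences (v₁,…,v_k) of distinct elements of G, with pairwise disjoint vertex sets and pairwise disjoint colour sets, such that each sequence contains exactly one element of V and its remaining k−1 elements lie in (R₁ ∖ U) ∖ V, and for each sequence the k colours v_i − v_{i+1} (indices mod k) are pairwise distinct and lie in R₂ ∖ U. -/
open scoped Classical

/-- The probability that a `p`-random subset of the finite type `G` (each element included
independently with probability `p`) equals the finset `A`. -/
noncomputable def setProb (G : Type) [Fintype G] [DecidableEq G] (p : ℝ) (A : Finset G) : ℝ :=
  p ^ A.card * (1 - p) ^ (Fintype.card G - A.card)

set_option linter.unusedSectionVars false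


section Prob

variable {Λ : Type} [Fintype Λ] [DecidableEq Λ]

noncomputable def wfun (p : ℝ) : Bool → ℝ := fun b => if b then p else 1 - p

noncomputable def wt (p : ℝ) (ω : Λ → Bool) : ℝ := ∏ l, wfun p (ω l)

noncomputable def Ex (p : ℝ) (f : (Λ → Bool) → ℝ) : ℝ := ∑ ω : Λ → Bool, wt p ω * f ω

lemma sum_pi_bool (F : Λ → Bool → ℝ) :
    (∑ ω : Λ → Bool, ∏ l, F l (ω l)) = ∏ l, (F l true + F l false) := by
  rw [← Fintype.prod_sum F]
  congr 1; ext l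
  exact Fintype.sum_bool (F l)

lemma wt_nonneg {p : ℝ} (hp0 : 0 ≤ p) (hp1 : p ≤ 1) (ω : Λ → Bool) : 0 ≤ wt p ω :=
  Finset.prod_nonneg fun l _ => by cases h : ω l <;> simp [wfun, h] <;> linarith

lemma wt_total (p : ℝ) : (∑ ω : Λ → Bool, wt p ω) = 1 := by
  have h := sum_pi_bool (fun (_ : Λ) (b : Bool) => wfun p b)
  unfold wt
  rw [h]
  simp [wfun]

lemma Ex_const (p : ℝ) (c : ℝ) : Ex p (fun _ : Λ → Bool => c) = c := by
  unfold Ex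
  rw [← Finset.sum_mul, wt_total, one_mul]

lemma Ex_mono {p : ℝ} (hp0 : 0 ≤ p) (hp1 : p ≤ 1) {f g : (Λ → Bool) → ℝ}
    (h : ∀ ω, f ω ≤ g ω) : Ex p f ≤ Ex p g :=
  Finset.sum_le_sum fun ω _ => mul_le_mul_of_nonneg_left (h ω) (wt_nonneg hp0 hp1 ω)

lemma Ex_smul (p c : ℝ) (f : (Λ → Bool) → ℝ) :
    Ex p (fun ω => c * f ω) = c * Ex p f := by
  unfold Ex; rw [Finset.mul_sum]; congr 1; ext ω; ring

lemma Ex_add (p : ℝ) (f g : (Λ → Bool) → ℝ) :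
    Ex p (fun ω => f ω + g ω) = Ex p f + Ex p g := by
  unfold Ex; rw [← Finset.sum_add_distrib]; congr 1; ext ω; ring

lemma Ex_sub (p : ℝ) (f g : (Λ → Bool) → ℝ) :
    Ex p (fun ω => f ω - g ω) = Ex p f - Ex p g := by
  unfold Ex; rw [← Finset.sum_sub_distrib]; congr 1; ext ω; ring

lemma Ex_sum (p : ℝ) {ι : Type} (s : Finset ι) (F : ι → (Λ → Bool) → ℝ) :
    Ex p (fun ω => ∑ i ∈ s, F i ω) = ∑ i ∈ s, Ex p (F i) := by
  unfold Ex
  simp_rw [Finset.mul_sum]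
  rw [Finset.sum_comm]

lemma Ex_prod_ind (p : ℝ) (T : Finset Λ) :
    Ex p (fun ω => ∏ l ∈ T, (if ω l = true then (1:ℝ) else 0)) = p ^ T.card := by
  classical
  unfold Ex wt
  have hpoint : ∀ ω : Λ → Bool,
      (∏ l, wfun p (ω l)) * (∏ l ∈ T, (if ω l = true then (1:ℝ) else 0))
      = ∏ l, (wfun p (ω l) * (if l ∈ T then (if ω l = true then (1:ℝ) else 0) else 1)) := by
    intro ω
    rw [Finset.prod_mul_distrib]
    congr 1
    rw [Finset.prod_ite_mem Finset.univ T (fun l => if ω l = true then (1:ℝ) else 0),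
      Finset.univ_inter]
  rw [Finset.sum_congr rfl (fun ω _ => hpoint ω),
    sum_pi_bool (fun l b => wfun p b * (if l ∈ T then (if b = true then (1:ℝ) else 0) else 1))]
  have : ∀ l : Λ, (wfun p true * (if l ∈ T then (if true = true then (1:ℝ) else 0) else 1)
      + wfun p false * (if l ∈ T then (if false = true then (1:ℝ) else 0) else 1))
      = if l ∈ T then p else 1 := by
    intro l
    by_cases h : l ∈ T <;> simp [wfun, h]
  rw [Finset.prod_congr rfl (fun l _ => this l),
    Finset.prod_ite_mem Finset.univ T (fun _ => p), Finset.univ_inter, Finset.prod_const]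

lemma ind_expand (c : ℝ) (T : Finset Λ) (ω : Λ → Bool) :
    (if (∀ l ∈ T, ω l = true) then c else 1)
      = 1 + (c - 1) * ∏ l ∈ T, (if ω l = true then (1:ℝ) else 0) := by
  by_cases h : ∀ l ∈ T, ω l = true
  · rw [if_pos h, Finset.prod_congr rfl (fun l hl => if_pos (h l hl)), Finset.prod_const,
      one_pow]
    ring
  · rw [if_neg h]
    push_neg at h
    obtain ⟨l, hl, hlf⟩ := h
    have hz : (if ω l = true then (1:ℝ) else 0) = 0 := if_neg hlf
    rw [Finset.prod_eq_zero hl hz]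
    ring

lemma Ex_prod_if {ι : Type} [DecidableEq ι] (p : ℝ) (s : Finset ι) (T : ι → Finset Λ)
    (hd : ∀ i ∈ s, ∀ j ∈ s, i ≠ j → Disjoint (T i) (T j)) (c : ι → ℝ) :
    Ex p (fun ω => ∏ x ∈ s, (if (∀ l ∈ T x, ω l = true) then c x else 1))
      = ∏ x ∈ s, (1 + (c x - 1) * p ^ (T x).card) := by
  classical
  have expand : ∀ ω : Λ → Bool,
      (∏ x ∈ s, (if (∀ l ∈ T x, ω l = true) then c x else 1))
        = ∑ t ∈ s.powerset, ∏ x ∈ t,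
            ((c x - 1) * ∏ l ∈ T x, (if ω l = true then (1:ℝ) else 0)) := by
    intro ω
    rw [Finset.prod_congr rfl (fun x _ => ind_expand (c x) (T x) ω)]
    have := Finset.prod_add
      (fun x => (c x - 1) * ∏ l ∈ T x, (if ω l = true then (1:ℝ) else 0))
      (fun _ : ι => (1:ℝ)) s
    simp only [Finset.prod_const_one, mul_one] at this
    rw [← this]
    apply Finset.prod_congr rfl
    intro x _
    ring
  have key : ∀ t ∈ s.powerset,
      Ex p (fun ω => ∏ x ∈ t,
          ((c x - 1) * ∏ l ∈ T x, (if ω l = true then (1:ℝ) else 0)))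
        = ∏ x ∈ t, ((c x - 1) * p ^ (T x).card) := by
    intro t ht
    have hts : t ⊆ s := Finset.mem_powerset.mp ht
    have hdt : ∀ i ∈ t, ∀ j ∈ t, i ≠ j → Disjoint (T i) (T j) :=
      fun i hi j hj hij => hd i (hts hi) j (hts hj) hij
    have h1 : ∀ ω : Λ → Bool, (∏ x ∈ t,
          ((c x - 1) * ∏ l ∈ T x, (if ω l = true then (1:ℝ) else 0)))
        = (∏ x ∈ t, (c x - 1)) * ∏ l ∈ t.biUnion T, (if ω l = true then (1:ℝ) else 0) := by
      intro ω
      rw [Finset.prod_mul_distrib, Finset.prod_biUnion]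
      intro i hi j hj hij
      exact hdt i hi j hj hij
    calc Ex p (fun ω => ∏ x ∈ t,
          ((c x - 1) * ∏ l ∈ T x, (if ω l = true then (1:ℝ) else 0)))
        = Ex p (fun ω => (∏ x ∈ t, (c x - 1)) *
            ∏ l ∈ t.biUnion T, (if ω l = true then (1:ℝ) else 0)) := by
          congr 1; ext ω; rw [h1]
      _ = (∏ x ∈ t, (c x - 1)) * p ^ (t.biUnion T).card := by
          rw [Ex_smul, Ex_prod_ind]
      _ = ∏ x ∈ t, ((c x - 1) * p ^ (T x).card) := by
          rw [Finset.card_biUnion hdt, ← Finset.prod_pow_eq_pow_sum,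
            Finset.prod_mul_distrib]
  calc Ex p (fun ω => ∏ x ∈ s, (if (∀ l ∈ T x, ω l = true) then c x else 1))
      = Ex p (fun ω => ∑ t ∈ s.powerset, ∏ x ∈ t,
          ((c x - 1) * ∏ l ∈ T x, (if ω l = true then (1:ℝ) else 0))) := by
        congr 1; ext ω; rw [expand]
    _ = ∑ t ∈ s.powerset, ∏ x ∈ t, ((c x - 1) * p ^ (T x).card) := by
        rw [Ex_sum]
        exact Finset.sum_congr rfl key
    _ = ∏ x ∈ s, (1 + (c x - 1) * p ^ (T x).card) := by
        have := Finset.prod_add (fun x => (c x - 1) * p ^ (T x).card)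
          (fun _ : ι => (1:ℝ)) s
        simp only [Finset.prod_const_one, mul_one] at this
        rw [← this]
        exact Finset.prod_congr rfl fun x _ => by ring


end Prob
section Group

variable {G : Type} [AddCommGroup G] [Fintype G] [DecidableEq G]

def goodsR (R₁ R₂ : Finset G) (w z : G) : Finset G :=
  Finset.univ.filter (fun x => x ∈ R₁ ∧ w - x ∈ R₂ ∧ x - z ∈ R₂ ∧ w - x ≠ x - z)

def GoodR (θ : ℝ) (R₁ R₂ : Finset G) : Prop :=
  ∀ w z : G, w ≠ z → θ ≤ ((goodsR R₁ R₂ w z).card : ℝ)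

noncomputable def toR1 (ω : (G ⊕ G) → Bool) : Finset G :=
  Finset.univ.filter (fun g => ω (Sum.inl g) = true)

noncomputable def toR2 (ω : (G ⊕ G) → Bool) : Finset G :=
  Finset.univ.filter (fun g => ω (Sum.inr g) = true)

noncomputable def thr (G : Type) [Fintype G] (p : ℝ) : ℝ := p ^ 3 * (Fintype.card G) / 16

lemma involution_split (σ : G → G) (hσ : ∀ x, σ (σ x) = x) (S : Finset G) :
    (∀ x ∈ S, σ x ∈ S ∧ σ x ≠ x) →
    ∃ X : Finset G, X ⊆ S ∧ (∀ x ∈ X, σ x ∉ X) ∧ S.card ≤ 2 * X.card := by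
  classical
  induction S using Finset.strongInduction with
  | _ S ih =>
    intro hcl
    rcases Finset.eq_empty_or_nonempty S with rfl | ⟨x₀, hx₀⟩
    · exact ⟨∅, Finset.Subset.refl _, by simp, by simp⟩
    · obtain ⟨hσx₀S, hσx₀⟩ := hcl x₀ hx₀
      set S' := S \ {x₀, σ x₀} with hS'
      have hsub : S' ⊆ S := Finset.sdiff_subset
      have hx₀S' : x₀ ∉ S' := by simp [hS']
      have hσx₀S' : σ x₀ ∉ S' := by simp [hS']
      have hss : S' ⊂ S := (Finset.ssubset_iff_of_subset hsub).mpr ⟨x₀, hx₀, hx₀S'⟩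
      have hcl' : ∀ x ∈ S', σ x ∈ S' ∧ σ x ≠ x := by
        intro x hx
        have hxS : x ∈ S := hsub hx
        have hx' : x ∉ ({x₀, σ x₀} : Finset G) := (Finset.mem_sdiff.mp hx).2
        simp only [Finset.mem_insert, Finset.mem_singleton] at hx'
        push_neg at hx'
        refine ⟨?_, (hcl x hxS).2⟩
        rw [Finset.mem_sdiff]
        refine ⟨(hcl x hxS).1, ?_⟩
        simp only [Finset.mem_insert, Finset.mem_singleton]
        push_neg
        constructor
        · intro h; exact hx'.2 (by rw [← h, hσ])
        · intro h
          exact hx'.1 (by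
            have := congrArg σ h
            rwa [hσ, hσ] at this)
      obtain ⟨X, hXS, hXfree, hcard⟩ := ih S' hss hcl'
      have hx₀X : x₀ ∉ X := fun h => hx₀S' (hXS h)
      refine ⟨insert x₀ X, ?_, ?_, ?_⟩
      · intro x hx
        rcases Finset.mem_insert.mp hx with rfl | hx
        · exact hx₀
        · exact hsub (hXS hx)
      · intro x hx
        rcases Finset.mem_insert.mp hx with rfl | hx
        · intro hmem
          rcases Finset.mem_insert.mp hmem with h | h
          · exact hσx₀ h
          · exact hσx₀S' (hXS h)
        · intro hmem
          rcases Finset.mem_insert.mp hmem with h | h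
          · have hx' : x = σ x₀ := by rw [← h, hσ]
            exact hσx₀S' (hXS (hx' ▸ hx))
          · exact hXfree x hx h
      · have hpair : ({x₀, σ x₀} : Finset G) ⊆ S := by
          intro y hy
          rcases Finset.mem_insert.mp hy with rfl | hy
          · exact hx₀
          · rw [Finset.mem_singleton] at hy; exact hy ▸ hσx₀S
        have hpc : ({x₀, σ x₀} : Finset G).card = 2 := Finset.card_pair (Ne.symm hσx₀)
        have h1 : S'.card = S.card - 2 := by rw [hS', Finset.card_sdiff_of_subset hpair, hpc]
        have h2 : 2 ≤ S.card := hpc ▸ Finset.card_le_card hpair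
        rw [Finset.card_insert_of_notMem hx₀X]
        omega

lemma card_nonfixed (w z : G) (hwz : w ≠ z) :
    (Fintype.card G : ℝ) ≤ 2 * ((Finset.univ.filter (fun x : G => ¬ (w + z - x = x))).card : ℝ) := by
  classical
  have hsplit := Finset.card_filter_add_card_filter_not
    (s := (Finset.univ : Finset G)) (p := fun x : G => w + z - x = x)
  rw [Finset.card_univ] at hsplit
  by_cases hy : ∃ y : G, ¬ (y + y = 0)
  · obtain ⟨y, hy⟩ := hy
    have hinj : ∀ x ∈ Finset.univ.filter (fun x : G => w + z - x = x),
        x + y ∈ Finset.univ.filter (fun x : G => ¬ (w + z - x = x)) := by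
      intro x hx
      rw [Finset.mem_filter] at hx ⊢
      refine ⟨Finset.mem_univ _, ?_⟩
      intro hcon
      apply hy
      have h1 : w + z - (x + y) = (w + z - x) - y := by abel
      rw [h1, hx.2, sub_eq_add_neg] at hcon
      have h5 : -y = y := add_left_cancel hcon
      exact add_eq_zero_iff_neg_eq.mpr h5
    have hle : (Finset.univ.filter (fun x : G => w + z - x = x)).card
        ≤ (Finset.univ.filter (fun x : G => ¬ (w + z - x = x))).card := by
      apply Finset.card_le_card_of_injOn (fun x => x + y) hinj
      intro a _ b _ hab
      exact add_right_cancel hab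
    have : Fintype.card G ≤ 2 * (Finset.univ.filter (fun x : G => ¬ (w + z - x = x))).card := by
      omega
    exact_mod_cast this
  · push_neg at hy
    have hF : Finset.univ.filter (fun x : G => w + z - x = x) = ∅ := by
      rw [Finset.filter_eq_empty_iff]
      intro x _
      intro hcon
      apply hwz
      have hxx : x + x = 0 := hy x
      have h1 : w + z = x + x := sub_eq_iff_eq_add.mp hcon
      have h2 : w + z = 0 := by rw [h1, hxx]
      have h3 : -w = z := neg_eq_of_add_eq_zero_right h2
      have h4 : -w = w := neg_eq_of_add_eq_zero_right (hy w)
      exact h4.symm.trans h3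
    rw [hF, Finset.card_empty] at hsplit
    have : Fintype.card G ≤ 2 * (Finset.univ.filter (fun x : G => ¬ (w + z - x = x))).card := by
      omega
    exact_mod_cast this

end Group
section Chernoff

variable {G : Type} [AddCommGroup G] [Fintype G] [DecidableEq G]

lemma fix_iff (w z x : G) : (w - x = x - z) ↔ (w + z - x = x) := by
  rw [sub_eq_sub_iff_add_eq_add, sub_eq_iff_eq_add]

lemma prob_pair (p : ℝ) (hp0 : 0 ≤ p) (hp1 : p ≤ 1) (w z : G) (hwz : w ≠ z) :
    Ex p (fun ω : (G ⊕ G) → Bool =>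
        if ((goodsR (toR1 ω) (toR2 ω) w z).card : ℝ) < thr G p then (1:ℝ) else 0)
      ≤ Real.exp (-(thr G p)) := by
  classical
  set n := Fintype.card G with hn
  have hθdef : thr G p = p ^ 3 * (n : ℝ) / 16 := rfl
  set θ := thr G p with hθ
  set σ : G → G := fun x => w + z - x with hσdef
  have hσ : ∀ x, σ (σ x) = x := fun x => sub_sub_cancel _ _
  have hScl : ∀ x ∈ Finset.univ.filter (fun x : G => ¬ (w + z - x = x)),
      σ x ∈ Finset.univ.filter (fun x : G => ¬ (w + z - x = x)) ∧ σ x ≠ x := by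
    intro x hx
    rw [Finset.mem_filter] at hx
    have hne : σ x ≠ x := hx.2
    constructor
    · rw [Finset.mem_filter]
      refine ⟨Finset.mem_univ _, ?_⟩
      show ¬ (σ (σ x) = σ x)
      rw [hσ]
      exact fun h => hne h.symm
    · exact hne
  obtain ⟨X, hXS, hXfree, hXcard⟩ :=
    involution_split σ hσ (Finset.univ.filter (fun x : G => ¬ (w + z - x = x))) hScl
  have hXfix : ∀ x ∈ X, ¬ (w + z - x = x) := fun x hx => (Finset.mem_filter.mp (hXS hx)).2
  have hn4 : (n : ℝ) ≤ 4 * (X.card : ℝ) := by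
    have h2 := card_nonfixed w z hwz
    have h3 : ((Finset.univ.filter (fun x : G => ¬ (w + z - x = x))).card : ℝ)
        ≤ 2 * (X.card : ℝ) := by exact_mod_cast hXcard
    rw [← hn] at h2
    linarith
  set T : G → Finset (G ⊕ G) :=
    fun x => {Sum.inl x, Sum.inr (w - x), Sum.inr (x - z)} with hT
  have hTcard : ∀ x ∈ X, (T x).card = 3 := by
    intro x hx
    have hne2 : Sum.inr (w - x) ∉ ({Sum.inr (x - z)} : Finset (G ⊕ G)) := by
      simp only [Finset.mem_singleton, Sum.inr.injEq]
      intro h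
      exact hXfix x hx ((fix_iff w z x).mp h)
    rw [hT]
    rw [Finset.card_insert_of_notMem (by simp), Finset.card_insert_of_notMem hne2,
      Finset.card_singleton]
  have hTdisj : ∀ x ∈ X, ∀ x' ∈ X, x ≠ x' → Disjoint (T x) (T x') := by
    intro x hx x' hx' hne
    rw [Finset.disjoint_left]
    intro l hl hl'
    rw [hT] at hl hl'
    simp only [Finset.mem_insert, Finset.mem_singleton] at hl hl'
    rcases hl with rfl | rfl | rfl <;> rcases hl' with h | h | h
    · exact hne (Sum.inl_injective h)
    · exact Sum.inl_ne_inr h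
    · exact Sum.inl_ne_inr h
    · exact Sum.inr_ne_inl h
    · exact hne (sub_right_inj.mp (Sum.inr_injective h))
    · have hadd : w + z = x' + x := sub_eq_sub_iff_add_eq_add.mp (Sum.inr_injective h)
      have hσx : σ x = x' := by
        show w + z - x = x'
        rw [hadd]
        exact add_sub_cancel_right x' x
      exact hXfree x hx (hσx ▸ hx')
    · exact Sum.inr_ne_inl h
    · have hadd : x + x' = w + z := sub_eq_sub_iff_add_eq_add.mp (Sum.inr_injective h)
      have hσx : σ x' = x := by
        show w + z - x' = x
        rw [← hadd]
        exact add_sub_cancel_right x x'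
      exact hXfree x' hx' (hσx ▸ hx)
    · exact hne (sub_left_inj.mp (Sum.inr_injective h))
  set cnt : ((G ⊕ G) → Bool) → ℕ :=
    fun ω => (X.filter (fun x => ∀ l ∈ T x, ω l = true)).card with hcnt
  have hcnt_le : ∀ ω, cnt ω ≤ (goodsR (toR1 ω) (toR2 ω) w z).card := by
    intro ω
    apply Finset.card_le_card
    intro x hx
    rw [Finset.mem_filter] at hx
    obtain ⟨hxX, hall⟩ := hx
    have h1 : ω (Sum.inl x) = true := hall _ (by rw [hT]; simp)
    have h2 : ω (Sum.inr (w - x)) = true := hall _ (by rw [hT]; simp)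
    have h3 : ω (Sum.inr (x - z)) = true := hall _ (by rw [hT]; simp)
    unfold goodsR toR1 toR2
    rw [Finset.mem_filter]
    refine ⟨Finset.mem_univ _, ?_, ?_, ?_, ?_⟩
    · rw [Finset.mem_filter]; exact ⟨Finset.mem_univ _, h1⟩
    · rw [Finset.mem_filter]; exact ⟨Finset.mem_univ _, h2⟩
    · rw [Finset.mem_filter]; exact ⟨Finset.mem_univ _, h3⟩
    · intro hcol; exact hXfix x hxX ((fix_iff w z x).mp hcol)
  set D := Real.log 2 with hD
  have hD0 : 0 ≤ D := Real.log_nonneg one_le_two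
  have hD1 : D ≤ 1 := by
    have := Real.log_le_sub_one_of_pos (by norm_num : (0:ℝ) < 2)
    linarith
  have half : Real.exp (-D) = (1/2 : ℝ) := by
    rw [hD, Real.exp_neg, Real.exp_log (by norm_num : (0:ℝ) < 2)]
    norm_num
  have hn0 : (0:ℝ) ≤ (n:ℝ) := Nat.cast_nonneg n
  have hp3 : (0:ℝ) ≤ p ^ 3 := by positivity
  have hθ0 : 0 ≤ θ := by rw [hθdef]; positivity
  have pointwise : ∀ ω : (G ⊕ G) → Bool,
      (if ((goodsR (toR1 ω) (toR2 ω) w z).card : ℝ) < θ then (1:ℝ) else 0)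
        ≤ Real.exp (θ * D) * ∏ x ∈ X, (if (∀ l ∈ T x, ω l = true) then (1/2:ℝ) else 1) := by
    intro ω
    have hprod : (∏ x ∈ X, (if (∀ l ∈ T x, ω l = true) then (1/2:ℝ) else 1))
        = (1/2:ℝ) ^ cnt ω := by
      rw [Finset.prod_ite, Finset.prod_const, Finset.prod_const, one_pow, mul_one]
    rw [hprod]
    by_cases hc : ((goodsR (toR1 ω) (toR2 ω) w z).card : ℝ) < θ
    · rw [if_pos hc]
      have h1 : (cnt ω : ℝ) ≤ θ := by
        have h2 : (cnt ω : ℝ) ≤ ((goodsR (toR1 ω) (toR2 ω) w z).card : ℝ) := by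
          exact_mod_cast hcnt_le ω
        linarith
      rw [← half, ← Real.exp_nat_mul, ← Real.exp_add]
      apply Real.one_le_exp
      nlinarith [mul_nonneg (sub_nonneg.mpr h1) hD0]
    · rw [if_neg hc]
      positivity
  calc Ex p (fun ω : (G ⊕ G) → Bool =>
        if ((goodsR (toR1 ω) (toR2 ω) w z).card : ℝ) < θ then (1:ℝ) else 0)
      ≤ Ex p (fun ω => Real.exp (θ * D) *
          ∏ x ∈ X, (if (∀ l ∈ T x, ω l = true) then (1/2:ℝ) else 1)) :=
        Ex_mono hp0 hp1 pointwise
    _ = Real.exp (θ * D) * Ex p (fun ω =>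
          ∏ x ∈ X, (if (∀ l ∈ T x, ω l = true) then (1/2:ℝ) else 1)) := Ex_smul _ _ _
    _ = Real.exp (θ * D) * ∏ x ∈ X, (1 + ((1/2:ℝ) - 1) * p ^ (T x).card) := by
        rw [Ex_prod_if p X T hTdisj]
    _ ≤ Real.exp (θ * D) * Real.exp (-(p^3/2)) ^ X.card := by
        apply mul_le_mul_of_nonneg_left ?_ (Real.exp_nonneg _)
        have hple : p ^ 3 ≤ 1 := pow_le_one₀ hp0 hp1
        have hstep : ∀ x ∈ X, 1 + ((1/2:ℝ) - 1) * p ^ (T x).card ≤ Real.exp (-(p^3/2)) := by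
          intro x hx
          rw [hTcard x hx]
          have := Real.add_one_le_exp (-(p^3/2))
          linarith
        have hnn : ∀ x ∈ X, (0:ℝ) ≤ 1 + ((1/2:ℝ) - 1) * p ^ (T x).card := by
          intro x hx
          rw [hTcard x hx]
          linarith
        calc (∏ x ∈ X, (1 + ((1/2:ℝ) - 1) * p ^ (T x).card))
            ≤ ∏ _x ∈ X, Real.exp (-(p^3/2)) := Finset.prod_le_prod hnn hstep
          _ = Real.exp (-(p^3/2)) ^ X.card := Finset.prod_const _
    _ ≤ Real.exp (-θ) := by
        rw [← Real.exp_nat_mul, ← Real.exp_add]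
        apply Real.exp_le_exp.mpr
        have hθle : θ ≤ p ^ 3 * (X.card : ℝ) / 4 := by
          rw [hθdef]
          nlinarith
        have hD1' : θ * D ≤ θ := by nlinarith
        nlinarith

lemma prob_good (p : ℝ) (hp0 : 0 ≤ p) (hp1 : p ≤ 1) :
    1 - (Fintype.card G : ℝ)^2 * Real.exp (-(thr G p)) ≤
      Ex p (fun ω : (G ⊕ G) → Bool =>
        if GoodR (thr G p) (toR1 ω) (toR2 ω) then (1:ℝ) else 0) := by
  classical
  set θ := thr G p with hθ
  set Q := (Finset.univ : Finset G).offDiag with hQ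
  have pointwise : ∀ ω : (G ⊕ G) → Bool,
      1 - (∑ q ∈ Q, (if ((goodsR (toR1 ω) (toR2 ω) q.1 q.2).card : ℝ) < θ
          then (1:ℝ) else 0))
        ≤ (if GoodR θ (toR1 ω) (toR2 ω) then (1:ℝ) else 0) := by
    intro ω
    by_cases hg : GoodR θ (toR1 ω) (toR2 ω)
    · rw [if_pos hg]
      have h0 : (0:ℝ) ≤ ∑ q ∈ Q, (if ((goodsR (toR1 ω) (toR2 ω) q.1 q.2).card : ℝ) < θ
          then (1:ℝ) else 0) := Finset.sum_nonneg (fun q _ => by positivity)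
      linarith
    · rw [if_neg hg]
      unfold GoodR at hg
      push_neg at hg
      obtain ⟨w, z, hwz, hbad⟩ := hg
      have hmem : (w, z) ∈ Q := by
        rw [hQ, Finset.mem_offDiag]
        exact ⟨Finset.mem_univ _, Finset.mem_univ _, hwz⟩
      have h1 : (1:ℝ) ≤ ∑ q ∈ Q, (if ((goodsR (toR1 ω) (toR2 ω) q.1 q.2).card : ℝ) < θ
          then (1:ℝ) else 0) := by
        have hterm : (if ((goodsR (toR1 ω) (toR2 ω) (w, z).1 (w, z).2).card : ℝ) < θ
            then (1:ℝ) else 0) = 1 := if_pos hbad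
        calc (1:ℝ) = _ := hterm.symm
          _ ≤ _ := Finset.single_le_sum (f := fun q : G × G =>
              (if ((goodsR (toR1 ω) (toR2 ω) q.1 q.2).card : ℝ) < θ then (1:ℝ) else 0))
              (fun q _ => by positivity) hmem
      linarith
  have hbound : ∀ q ∈ Q, Ex p (fun ω : (G ⊕ G) → Bool =>
      if ((goodsR (toR1 ω) (toR2 ω) q.1 q.2).card : ℝ) < θ then (1:ℝ) else 0)
      ≤ Real.exp (-θ) := by
    intro q hq
    rw [hQ, Finset.mem_offDiag] at hq
    exact prob_pair p hp0 hp1 q.1 q.2 hq.2.2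
  calc 1 - (Fintype.card G : ℝ)^2 * Real.exp (-θ)
      ≤ 1 - (Q.card : ℝ) * Real.exp (-θ) := by
        have hQc : (Q.card : ℝ) ≤ (Fintype.card G : ℝ)^2 := by
          rw [hQ, Finset.offDiag_card, Finset.card_univ]
          have h1 : Fintype.card G * Fintype.card G - Fintype.card G
              ≤ Fintype.card G * Fintype.card G := Nat.sub_le _ _
          calc ((Fintype.card G * Fintype.card G - Fintype.card G : ℕ) : ℝ)
              ≤ ((Fintype.card G * Fintype.card G : ℕ) : ℝ) := by exact_mod_cast h1
            _ = (Fintype.card G : ℝ)^2 := by push_cast; ring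
        have := Real.exp_nonneg (-θ)
        nlinarith
    _ ≤ 1 - Ex p (fun ω : (G ⊕ G) → Bool => ∑ q ∈ Q,
          (if ((goodsR (toR1 ω) (toR2 ω) q.1 q.2).card : ℝ) < θ then (1:ℝ) else 0)) := by
        rw [Ex_sum]
        have h2 : (∑ q ∈ Q, Ex p (fun ω : (G ⊕ G) → Bool =>
            if ((goodsR (toR1 ω) (toR2 ω) q.1 q.2).card : ℝ) < θ then (1:ℝ) else 0))
            ≤ ∑ _q ∈ Q, Real.exp (-θ) := Finset.sum_le_sum hbound
        rw [Finset.sum_const, nsmul_eq_mul] at h2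
        linarith
    _ = Ex p (fun ω : (G ⊕ G) → Bool => 1 - ∑ q ∈ Q,
          (if ((goodsR (toR1 ω) (toR2 ω) q.1 q.2).card : ℝ) < θ then (1:ℝ) else 0)) := by
        rw [Ex_sub, Ex_const]
    _ ≤ Ex p (fun ω : (G ⊕ G) → Bool =>
          if GoodR θ (toR1 ω) (toR2 ω) then (1:ℝ) else 0) := Ex_mono hp0 hp1 pointwise

end Chernoff
section Convert

variable {G : Type} [AddCommGroup G] [Fintype G] [DecidableEq G]

lemma setProb_eq (p : ℝ) (R : Finset G) :
    setProb G p R = ∏ g : G, (if g ∈ R then p else 1 - p) := by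
  classical
  have h1 : Finset.univ.filter (fun g : G => g ∈ R) = R := by
    ext g; simp
  have h2 : Finset.univ.filter (fun g : G => ¬ g ∈ R) = Rᶜ := by
    ext g; simp [Finset.mem_compl]
  rw [Finset.prod_ite, Finset.prod_const, Finset.prod_const, h1, h2, Finset.card_compl]
  rfl

lemma wfun_decide (p : ℝ) (R : Finset G) (g : G) :
    wfun p (decide (g ∈ R)) = if g ∈ R then p else 1 - p := by
  by_cases h : g ∈ R <;> simp [wfun, h]

lemma sum_pair_eq_Ex (p : ℝ) (F : Finset G → Finset G → ℝ) :
    (∑ R₁ : Finset G, ∑ R₂ : Finset G, setProb G p R₁ * setProb G p R₂ * F R₁ R₂)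
      = Ex p (fun ω : (G ⊕ G) → Bool => F (toR1 ω) (toR2 ω)) := by
  classical
  rw [← Fintype.sum_prod_type']
  unfold Ex
  apply Finset.sum_nbij'
    (i := fun q : Finset G × Finset G =>
      (Sum.elim (fun g => decide (g ∈ q.1)) (fun g => decide (g ∈ q.2)) : (G ⊕ G) → Bool))
    (j := fun ω : (G ⊕ G) → Bool => (toR1 ω, toR2 ω))
  · intro q _; exact Finset.mem_univ _
  · intro ω _; exact Finset.mem_univ _
  · intro q _
    have h1 : toR1 (Sum.elim (fun g => decide (g ∈ q.1)) (fun g => decide (g ∈ q.2))) = q.1 := by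
      ext g; simp [toR1]
    have h2 : toR2 (Sum.elim (fun g => decide (g ∈ q.1)) (fun g => decide (g ∈ q.2))) = q.2 := by
      ext g; simp [toR2]
    rw [Prod.ext_iff]
    exact ⟨h1, h2⟩
  · intro ω _
    funext s
    rcases s with g | g
    · simp only [Sum.elim_inl]
      by_cases h : ω (Sum.inl g)
      · simp [toR1, h]
      · simp [toR1, h]
    · simp only [Sum.elim_inr]
      by_cases h : ω (Sum.inr g)
      · simp [toR2, h]
      · simp [toR2, h]
  · intro q _
    have h1 : toR1 (Sum.elim (fun g => decide (g ∈ q.1)) (fun g => decide (g ∈ q.2))) = q.1 := by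
      ext g; simp [toR1]
    have h2 : toR2 (Sum.elim (fun g => decide (g ∈ q.1)) (fun g => decide (g ∈ q.2))) = q.2 := by
      ext g; simp [toR2]
    dsimp only
    rw [h1, h2]
    unfold wt
    rw [Fintype.prod_sum_type]
    simp only [Sum.elim_inl, Sum.elim_inr]
    rw [Finset.prod_congr rfl (fun g _ => wfun_decide p q.1 g),
      Finset.prod_congr rfl (fun g _ => wfun_decide p q.2 g), ← setProb_eq, ← setProb_eq]

end Convert
section Det

variable {G : Type} [AddCommGroup G] [Fintype G] [DecidableEq G]

lemma step_lemma {θ : ℝ} {R₁ R₂ : Finset G} (h3 : GoodR θ R₁ R₂)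
    (hn : 2 ≤ Fintype.card G) (w : G) (Fv Fc : Finset G)
    (hbud : (Fv.card : ℝ) + 2 * (Fc.card : ℝ) < θ) :
    ∃ x : G, x ∈ R₁ ∧ x ∉ Fv ∧ w - x ∈ R₂ ∧ w - x ∉ Fc := by
  classical
  have hnt : Nontrivial G := Fintype.one_lt_card_iff_nontrivial.mp hn
  obtain ⟨z, hz⟩ := exists_ne w
  have hgood := h3 w z (Ne.symm hz)
  set B := Fv ∪ Fc.image (fun c => w - c) with hB
  have hBcard : (B.card : ℝ) ≤ (Fv.card : ℝ) + (Fc.card : ℝ) := by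
    have h1 : B.card ≤ Fv.card + (Fc.image (fun c => w - c)).card := Finset.card_union_le _ _
    have h2 : (Fc.image (fun c => w - c)).card ≤ Fc.card := Finset.card_image_le
    exact_mod_cast le_trans h1 (by omega)
  have hlt : B.card < (goodsR R₁ R₂ w z).card := by
    have hc : (B.card : ℝ) < ((goodsR R₁ R₂ w z).card : ℝ) := by
      have h0 : (0:ℝ) ≤ (Fc.card : ℝ) := Nat.cast_nonneg _
      linarith
    exact_mod_cast hc
  have hne : ((goodsR R₁ R₂ w z) \ B).Nonempty := by
    rw [← Finset.card_pos]
    have := Finset.le_card_sdiff B (goodsR R₁ R₂ w z)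
    omega
  obtain ⟨x, hx⟩ := hne
  rw [Finset.mem_sdiff] at hx
  obtain ⟨hxg, hxB⟩ := hx
  unfold goodsR at hxg
  rw [Finset.mem_filter] at hxg
  obtain ⟨-, hx1, hx2, hx3, hx4⟩ := hxg
  refine ⟨x, hx1, ?_, hx2, ?_⟩
  · intro hmem; exact hxB (by rw [hB]; exact Finset.mem_union_left _ hmem)
  · intro hmem
    apply hxB
    rw [hB]
    apply Finset.mem_union_right
    exact Finset.mem_image.mpr ⟨w - x, hmem, by rw [sub_sub_cancel]⟩

lemma close_lemma {θ : ℝ} {R₁ R₂ : Finset G} (h3 : GoodR θ R₁ R₂)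
    (w z : G) (hwz : w ≠ z) (Fv Fc : Finset G)
    (hbud : (Fv.card : ℝ) + 2 * (Fc.card : ℝ) < θ) :
    ∃ x : G, x ∈ R₁ ∧ x ∉ Fv ∧ w - x ∈ R₂ ∧ w - x ∉ Fc ∧ x - z ∈ R₂ ∧ x - z ∉ Fc ∧
      w - x ≠ x - z := by
  classical
  have hgood := h3 w z hwz
  set B := Fv ∪ Fc.image (fun c => w - c) ∪ Fc.image (fun c => c + z) with hB
  have hBcard : (B.card : ℝ) ≤ (Fv.card : ℝ) + 2 * (Fc.card : ℝ) := by
    have h1 : B.card ≤ (Fv ∪ Fc.image (fun c => w - c)).card + (Fc.image (fun c => c + z)).card :=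
      Finset.card_union_le _ _
    have h2 : (Fv ∪ Fc.image (fun c => w - c)).card ≤ Fv.card + (Fc.image (fun c => w - c)).card :=
      Finset.card_union_le _ _
    have h3' : (Fc.image (fun c => w - c)).card ≤ Fc.card := Finset.card_image_le
    have h4 : (Fc.image (fun c => c + z)).card ≤ Fc.card := Finset.card_image_le
    have : B.card ≤ Fv.card + Fc.card + Fc.card := by omega
    push_cast
    exact_mod_cast le_trans (Nat.cast_le.mpr this) (by push_cast; linarith)
  have hlt : B.card < (goodsR R₁ R₂ w z).card := by
    have hc : (B.card : ℝ) < ((goodsR R₁ R₂ w z).card : ℝ) := by linarith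
    exact_mod_cast hc
  have hne : ((goodsR R₁ R₂ w z) \ B).Nonempty := by
    rw [← Finset.card_pos]
    have := Finset.le_card_sdiff B (goodsR R₁ R₂ w z)
    omega
  obtain ⟨x, hx⟩ := hne
  rw [Finset.mem_sdiff] at hx
  obtain ⟨hxg, hxB⟩ := hx
  unfold goodsR at hxg
  rw [Finset.mem_filter] at hxg
  obtain ⟨-, hx1, hx2, hx3, hx4⟩ := hxg
  refine ⟨x, hx1, ?_, hx2, ?_, hx3, ?_, hx4⟩
  · intro hmem
    exact hxB (by rw [hB]; exact Finset.mem_union_left _ (Finset.mem_union_left _ hmem))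
  · intro hmem
    apply hxB
    rw [hB]
    apply Finset.mem_union_left
    apply Finset.mem_union_right
    exact Finset.mem_image.mpr ⟨w - x, hmem, by rw [sub_sub_cancel]⟩
  · intro hmem
    apply hxB
    rw [hB]
    apply Finset.mem_union_right
    exact Finset.mem_image.mpr ⟨x - z, hmem, by rw [sub_add_cancel]⟩

lemma path_lemma {θ : ℝ} {R₁ R₂ : Finset G} (h3 : GoodR θ R₁ R₂)
    (hn : 2 ≤ Fintype.card G) :
    ∀ m : ℕ, 2 ≤ m → ∀ u v : G, u ≠ v → ∀ Fv Fc : Finset G, u ∈ Fv → v ∈ Fv →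
    ((Fv.card : ℝ) + 2 * (Fc.card : ℝ) + 3 * m < θ) →
    ∃ g : ℕ → G, g 0 = u ∧ g m = v ∧
      (∀ i, 0 < i → i < m → g i ∈ R₁ ∧ g i ∉ Fv) ∧
      (∀ i j, i < j → j ≤ m → g i ≠ g j) ∧
      (∀ i, i < m → (g i - g (i+1)) ∈ R₂ ∧ (g i - g (i+1)) ∉ Fc) ∧
      (∀ i j, i < j → j < m → g i - g (i+1) ≠ g j - g (j+1)) := by
  intro m hm
  induction m, hm using Nat.le_induction with
  | base =>
    intro u v huv Fv Fc hu hv hbud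
    obtain ⟨x, hx1, hx2, hx3, hx4, hx5, hx6, hx7⟩ :=
      close_lemma h3 u v huv Fv Fc (by push_cast at hbud ⊢; linarith)
    set g : ℕ → G := fun i => if i = 0 then u else if i = 1 then x else v with hgdef
    have hg0 : g 0 = u := by norm_num [hgdef]
    have hg1 : g 1 = x := by norm_num [hgdef]
    have hg2 : g 2 = v := by norm_num [hgdef]
    refine ⟨g, hg0, hg2, ?_, ?_, ?_, ?_⟩
    · intro i h0 h2
      have : i = 1 := by omega
      subst this
      rw [hg1]
      exact ⟨hx1, hx2⟩
    · intro i j hij hj2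
      have hcase : (i = 0 ∧ j = 1) ∨ (i = 0 ∧ j = 2) ∨ (i = 1 ∧ j = 2) := by omega
      rcases hcase with ⟨rfl, rfl⟩ | ⟨rfl, rfl⟩ | ⟨rfl, rfl⟩
      · rw [hg0, hg1]; exact fun hh => hx2 (hh ▸ hu)
      · rw [hg0, hg2]; exact huv
      · rw [hg1, hg2]; exact fun hh => hx2 (hh ▸ hv)
    · intro i hi
      have hcase : i = 0 ∨ i = 1 := by omega
      rcases hcase with rfl | rfl
      · rw [show (0:ℕ)+1 = 1 from rfl, hg0, hg1]; exact ⟨hx3, hx4⟩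
      · rw [show (1:ℕ)+1 = 2 from rfl, hg1, hg2]; exact ⟨hx5, hx6⟩
    · intro i j hij hj
      have : i = 0 ∧ j = 1 := by omega
      obtain ⟨rfl, rfl⟩ := this
      rw [show (0:ℕ)+1 = 1 from rfl, show (1:ℕ)+1 = 2 from rfl, hg0, hg1, hg2]
      exact hx7
  | succ m hm ih =>
    intro u v huv Fv Fc hu hv hbud
    have hm0 : (0:ℝ) ≤ (m:ℝ) := Nat.cast_nonneg _
    obtain ⟨x, hx1, hx2, hx3, hx4⟩ := step_lemma h3 hn u Fv Fc (by push_cast at hbud ⊢; linarith)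
    have hxv : x ≠ v := fun h => hx2 (h ▸ hv)
    have hbud' : (((insert x Fv).card : ℝ) + 2 * ((insert (u - x) Fc).card : ℝ) + 3 * m < θ) := by
      have h1 : ((insert x Fv).card : ℝ) ≤ (Fv.card : ℝ) + 1 := by
        exact_mod_cast Finset.card_insert_le _ _
      have h2 : ((insert (u-x) Fc).card : ℝ) ≤ (Fc.card : ℝ) + 1 := by
        exact_mod_cast Finset.card_insert_le _ _
      push_cast at hbud ⊢
      linarith
    obtain ⟨h, hh0, hhm, hhint, hhvert, hhcol, hhcoldist⟩ :=
      ih x v hxv (insert x Fv) (insert (u - x) Fc)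
        (Finset.mem_insert_self _ _) (Finset.mem_insert_of_mem hv) hbud'
    set g : ℕ → G := fun i => if i = 0 then u else h (i - 1) with hgdef
    have hg0 : g 0 = u := by norm_num [hgdef]
    have hgs : ∀ i : ℕ, g (i + 1) = h i := by intro i; simp [hgdef]
    refine ⟨g, hg0, ?_, ?_, ?_, ?_, ?_⟩
    · rw [hgs]; exact hhm
    · intro i h0i him
      obtain ⟨i, rfl⟩ : ∃ j, i = j + 1 := ⟨i - 1, by omega⟩
      rw [hgs]
      rcases Nat.eq_zero_or_pos i with rfl | hipos
      · rw [hh0]; exact ⟨hx1, hx2⟩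
      · have hthis := hhint i hipos (by omega)
        exact ⟨hthis.1, fun hmem => hthis.2 (Finset.mem_insert_of_mem hmem)⟩
    · intro i j hij hjm
      obtain ⟨j, rfl⟩ : ∃ j', j = j' + 1 := ⟨j - 1, by omega⟩
      rw [hgs]
      rcases Nat.eq_zero_or_pos i with rfl | hipos
      · rw [hg0]
        rcases Nat.eq_zero_or_pos j with rfl | hjpos
        · rw [hh0]; exact fun hh => hx2 (hh ▸ hu)
        · rcases Nat.lt_or_ge j m with hjm' | hjm'
          · have hthis := hhint j hjpos hjm'
            exact fun hh => hthis.2 (hh ▸ Finset.mem_insert_of_mem hu)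
          · have hjeq : j = m := by omega
            subst hjeq
            rw [hhm]; exact huv
      · obtain ⟨i, rfl⟩ : ∃ i', i = i' + 1 := ⟨i - 1, by omega⟩
        rw [hgs]
        exact hhvert i j (by omega) (by omega)
    · intro i him
      rcases Nat.eq_zero_or_pos i with rfl | hipos
      · have hr0 : g 0 - g (0+1) = u - h 0 := by rw [hgs, hg0]
        rw [hr0, hh0]
        exact ⟨hx3, hx4⟩
      · obtain ⟨i, rfl⟩ : ∃ i', i = i' + 1 := ⟨i - 1, by omega⟩
        have hri : g (i+1) - g (i+1+1) = h i - h (i+1) := by rw [hgs, hgs]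
        rw [hri]
        have hthis := hhcol i (by omega)
        exact ⟨hthis.1, fun hmem => hthis.2 (Finset.mem_insert_of_mem hmem)⟩
    · intro i j hij hjm
      obtain ⟨j, rfl⟩ : ∃ j', j = j' + 1 := ⟨j - 1, by omega⟩
      have hrj : g (j+1) - g (j+1+1) = h j - h (j+1) := by rw [hgs, hgs]
      rcases Nat.eq_zero_or_pos i with rfl | hipos
      · have hr0 : g 0 - g (0+1) = u - h 0 := by rw [hgs, hg0]
        rw [hr0, hrj, hh0]
        have hthis := hhcol j (by omega)
        exact fun hh => hthis.2 (hh ▸ Finset.mem_insert_self _ _)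
      · obtain ⟨i, rfl⟩ : ∃ i', i = i' + 1 := ⟨i - 1, by omega⟩
        have hri : g (i+1) - g (i+1+1) = h i - h (i+1) := by rw [hgs, hgs]
        rw [hri, hrj]
        exact hhcoldist i j (by omega) (by omega)

lemma cycle_lemma {θ : ℝ} {R₁ R₂ : Finset G} (h3 : GoodR θ R₁ R₂)
    (hn : 2 ≤ Fintype.card G) (m : ℕ) (hm : 3 ≤ m) (v : G) (Fv Fc : Finset G) (hv : v ∈ Fv)
    (hbud : (Fv.card : ℝ) + 2 * (Fc.card : ℝ) + 3 * m < θ) :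
    ∃ g : ℕ → G, g 0 = v ∧ g m = v ∧
      (∀ i, 0 < i → i < m → g i ∈ R₁ ∧ g i ∉ Fv) ∧
      (∀ i j, i < j → j < m → g i ≠ g j) ∧
      (∀ i, i < m → (g i - g (i+1)) ∈ R₂ ∧ (g i - g (i+1)) ∉ Fc) ∧
      (∀ i j, i < j → j < m → g i - g (i+1) ≠ g j - g (j+1)) := by
  have hm0 : (3:ℝ) ≤ (m:ℝ) := by exact_mod_cast hm
  obtain ⟨x, hx1, hx2, hx3, hx4⟩ := step_lemma h3 hn v Fv Fc (by linarith)
  have hxv : x ≠ v := fun h => hx2 (h ▸ hv)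
  have hm1 : m - 1 + 1 = m := by omega
  have hcast : ((m - 1 : ℕ) : ℝ) = (m : ℝ) - 1 := by
    have : (1:ℕ) ≤ m := by omega
    push_cast [this]
    ring
  have hbud' : (((insert x Fv).card : ℝ) + 2 * ((insert (v - x) Fc).card : ℝ)
      + 3 * ((m - 1 : ℕ) : ℝ) < θ) := by
    have h1 : ((insert x Fv).card : ℝ) ≤ (Fv.card : ℝ) + 1 := by
      exact_mod_cast Finset.card_insert_le _ _
    have h2 : ((insert (v-x) Fc).card : ℝ) ≤ (Fc.card : ℝ) + 1 := by
      exact_mod_cast Finset.card_insert_le _ _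
    rw [hcast]
    linarith
  obtain ⟨h, hh0, hhm, hhint, hhvert, hhcol, hhcoldist⟩ :=
    path_lemma h3 hn (m - 1) (by omega) x v hxv (insert x Fv) (insert (v - x) Fc)
      (Finset.mem_insert_self _ _) (Finset.mem_insert_of_mem hv) hbud'
  set g : ℕ → G := fun i => if i = 0 then v else h (i - 1) with hgdef
  have hg0 : g 0 = v := by norm_num [hgdef]
  have hgs : ∀ i : ℕ, g (i + 1) = h i := by intro i; simp [hgdef]
  refine ⟨g, hg0, ?_, ?_, ?_, ?_, ?_⟩
  · rw [← hm1, hgs, hhm]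
  · intro i h0i him
    obtain ⟨i, rfl⟩ : ∃ j, i = j + 1 := ⟨i - 1, by omega⟩
    rw [hgs]
    rcases Nat.eq_zero_or_pos i with rfl | hipos
    · rw [hh0]; exact ⟨hx1, hx2⟩
    · have hthis := hhint i hipos (by omega)
      exact ⟨hthis.1, fun hmem => hthis.2 (Finset.mem_insert_of_mem hmem)⟩
  · intro i j hij hjm
    obtain ⟨j, rfl⟩ : ∃ j', j = j' + 1 := ⟨j - 1, by omega⟩
    rw [hgs]
    rcases Nat.eq_zero_or_pos i with rfl | hipos
    · rw [hg0]
      rcases Nat.eq_zero_or_pos j with rfl | hjpos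
      · rw [hh0]; exact fun hh => hx2 (hh ▸ hv)
      · have hthis := hhint j hjpos (by omega)
        exact fun hh => hthis.2 (hh ▸ Finset.mem_insert_of_mem hv)
    · obtain ⟨i, rfl⟩ : ∃ i', i = i' + 1 := ⟨i - 1, by omega⟩
      rw [hgs]
      exact hhvert i j (by omega) (by omega)
  · intro i him
    rcases Nat.eq_zero_or_pos i with rfl | hipos
    · have hr0 : g 0 - g (0+1) = v - h 0 := by rw [hgs, hg0]
      rw [hr0, hh0]
      exact ⟨hx3, hx4⟩
    · obtain ⟨i, rfl⟩ : ∃ i', i = i' + 1 := ⟨i - 1, by omega⟩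
      have hri : g (i+1) - g (i+1+1) = h i - h (i+1) := by rw [hgs, hgs]
      rw [hri]
      have hthis := hhcol i (by omega)
      exact ⟨hthis.1, fun hmem => hthis.2 (Finset.mem_insert_of_mem hmem)⟩
  · intro i j hij hjm
    obtain ⟨j, rfl⟩ : ∃ j', j = j' + 1 := ⟨j - 1, by omega⟩
    have hrj : g (j+1) - g (j+1+1) = h j - h (j+1) := by rw [hgs, hgs]
    rcases Nat.eq_zero_or_pos i with rfl | hipos
    · have hr0 : g 0 - g (0+1) = v - h 0 := by rw [hgs, hg0]
      rw [hr0, hrj, hh0]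
      have hthis := hhcol j (by omega)
      exact fun hh => hthis.2 (hh ▸ Finset.mem_insert_self _ _)
    · obtain ⟨i, rfl⟩ : ∃ i', i = i' + 1 := ⟨i - 1, by omega⟩
      have hri : g (i+1) - g (i+1+1) = h i - h (i+1) := by rw [hgs, hgs]
      rw [hri, hrj]
      exact hhcoldist i j (by omega) (by omega)

lemma cycle_zmod {θ : ℝ} {R₁ R₂ : Finset G} (h3 : GoodR θ R₁ R₂)
    (hn : 2 ≤ Fintype.card G) (m : ℕ) (hm : 3 ≤ m) (v : G) (Fv Fc : Finset G) (hv : v ∈ Fv)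
    (hbud : (Fv.card : ℝ) + 2 * (Fc.card : ℝ) + 3 * m < θ) :
    ∃ y : ZMod m → G, y 0 = v ∧ Function.Injective y ∧
      (∀ i : ZMod m, i ≠ 0 → y i ∈ R₁ ∧ y i ∉ Fv) ∧
      Function.Injective (fun i : ZMod m => y i - y (i + 1)) ∧
      (∀ i : ZMod m, y i - y (i + 1) ∈ R₂ ∧ y i - y (i + 1) ∉ Fc) := by
  haveI : NeZero m := ⟨by omega⟩
  haveI : Fact (1 < m) := ⟨by omega⟩
  obtain ⟨g, hg0, hgm, hint, hvert, hcol, hcoldist⟩ := cycle_lemma h3 hn m hm v Fv Fc hv hbud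
  set y : ZMod m → G := fun i => g i.val with hy
  have hvlt : ∀ i : ZMod m, i.val < m := fun i => ZMod.val_lt i
  have hysucc : ∀ i : ZMod m, y (i + 1) = g (i.val + 1) := by
    intro i
    show g ((i + 1 : ZMod m)).val = g (i.val + 1)
    have h1 : (i + 1 : ZMod m).val = (i.val + 1) % m := by
      rw [ZMod.val_add, ZMod.val_one]
    rcases Nat.lt_or_ge (i.val + 1) m with hlt | hge
    · rw [h1, Nat.mod_eq_of_lt hlt]
    · have h2 : i.val + 1 = m := by have := hvlt i; omega
      rw [h1, h2, Nat.mod_self, hg0, hgm]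
  have hcval : ∀ i : ZMod m, y i - y (i + 1) = g i.val - g (i.val + 1) := by
    intro i
    rw [hysucc i]
  have hy0 : y 0 = v := by
    show g ((0 : ZMod m)).val = v
    rw [ZMod.val_zero]
    exact hg0
  refine ⟨y, hy0, ?_, ?_, ?_, ?_⟩
  · intro i j hij
    have hvv : i.val = j.val := by
      by_contra hne
      rcases Nat.lt_or_ge i.val j.val with hlt | hge
      · exact hvert i.val j.val hlt (hvlt j) hij
      · exact hvert j.val i.val (by omega) (hvlt i) hij.symm
    exact ZMod.val_injective m hvv
  · intro i hi
    have hv0 : i.val ≠ 0 := fun hh => hi ((ZMod.val_eq_zero i).mp hh)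
    exact hint i.val (by omega) (hvlt i)
  · intro i j hij
    dsimp only at hij
    rw [hcval i, hcval j] at hij
    have hvv : i.val = j.val := by
      by_contra hne
      rcases Nat.lt_or_ge i.val j.val with hlt | hge
      · exact hcoldist i.val j.val hlt (hvlt j) hij
      · exact hcoldist j.val i.val (by omega) (hvlt i) hij.symm
    exact ZMod.val_injective m hvv
  · intro i
    rw [hcval i]
    exact hcol i.val (hvlt i)

lemma path_fin {θ : ℝ} {R₁ R₂ : Finset G} (h3 : GoodR θ R₁ R₂)
    (hn : 2 ≤ Fintype.card G) (k' : ℕ) (hk : 2 ≤ k') (u v : G) (huv : u ≠ v)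
    (Fv Fc : Finset G) (hu : u ∈ Fv) (hv : v ∈ Fv)
    (hbud : (Fv.card : ℝ) + 2 * (Fc.card : ℝ) + 3 * k' < θ) :
    ∃ x : Fin (k' + 1) → G, x 0 = u ∧ x (Fin.last k') = v ∧ Function.Injective x ∧
      (∀ i : Fin (k' + 1), i ≠ 0 → i ≠ Fin.last k' → x i ∈ R₁ ∧ x i ∉ Fv) ∧
      Function.Injective (fun i : Fin k' => x i.castSucc - x i.succ) ∧
      (∀ i : Fin k', x i.castSucc - x i.succ ∈ R₂ ∧ x i.castSucc - x i.succ ∉ Fc) := by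
  obtain ⟨g, hg0, hgm, hint, hvert, hcol, hcoldist⟩ :=
    path_lemma h3 hn k' hk u v huv Fv Fc hu hv hbud
  set x : Fin (k' + 1) → G := fun i => g i.val with hx
  have hcc : ∀ i : Fin k', x i.castSucc - x i.succ = g i.val - g (i.val + 1) := by
    intro i
    show g (i.castSucc.val) - g (i.succ.val) = _
    rw [Fin.coe_castSucc, Fin.val_succ]
  refine ⟨x, ?_, ?_, ?_, ?_, ?_, ?_⟩
  · show g ((0 : Fin (k'+1))).val = u
    rw [Fin.val_zero]
    exact hg0
  · show g ((Fin.last k')).val = v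
    rw [Fin.val_last]
    exact hgm
  · intro i j hij
    by_contra hne
    have hvv : i.val ≠ j.val := fun hh => hne (Fin.ext hh)
    rcases Nat.lt_or_ge i.val j.val with hlt | hge
    · exact hvert i.val j.val hlt (Nat.lt_succ_iff.mp j.isLt) hij
    · exact hvert j.val i.val (by omega) (Nat.lt_succ_iff.mp i.isLt) hij.symm
  · intro i hi0 hil
    have h0 : i.val ≠ 0 := fun hh => hi0 (Fin.ext (by rw [hh, Fin.val_zero]))
    have hl : i.val ≠ k' := fun hh => hil (Fin.ext (by rw [hh, Fin.val_last]))
    exact hint i.val (by omega) (by have := i.isLt; omega)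
  · intro i j hij
    dsimp only at hij
    rw [hcc i, hcc j] at hij
    have hvv : i.val = j.val := by
      by_contra hne
      rcases Nat.lt_or_ge i.val j.val with hlt | hge
      · exact hcoldist i.val j.val hlt j.isLt hij
      · exact hcoldist j.val i.val (by omega) i.isLt hij.symm
    exact Fin.ext hvv
  · intro i
    rw [hcc i]
    exact hcol i.val i.isLt

end Det
section Fam

variable {G : Type} [AddCommGroup G] [Fintype G] [DecidableEq G]

lemma family_lemma {θ : ℝ} {R₁ R₂ : Finset G} (h3 : GoodR θ R₁ R₂)
    (hn : 2 ≤ Fintype.card G) (k : ℕ) (hk : 3 ≤ k) (U V : Finset G)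
    (hbud : ((U.card : ℝ) + (V.card : ℝ) + (V.card : ℝ) * k + 1)
      + 2 * ((U.card : ℝ) + (V.card : ℝ) * k) + 3 * k < θ) :
    ∀ s : Finset G, s ⊆ V → ∃ f : {x : G // x ∈ s} → ZMod k → G,
      (∀ v, f v 0 = ↑v) ∧
      (∀ v, ∀ i : ZMod k, i ≠ 0 → f v i ∈ R₁ ∧ f v i ∉ U ∧ f v i ∉ V) ∧
      (∀ v, Function.Injective (f v)) ∧
      (∀ v v' : {x : G // x ∈ s}, (v : G) ≠ (v' : G) → ∀ i i', f v i ≠ f v' i') ∧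
      (∀ v, Function.Injective (fun i : ZMod k => f v i - f v (i + 1))) ∧
      (∀ v i, f v i - f v (i + 1) ∈ R₂ ∧ f v i - f v (i + 1) ∉ U) ∧
      (∀ v v' : {x : G // x ∈ s}, (v : G) ≠ (v' : G) → ∀ i i',
        f v i - f v (i + 1) ≠ f v' i' - f v' (i' + 1)) := by
  classical
  haveI : NeZero k := ⟨by omega⟩
  intro s
  induction s using Finset.induction_on with
  | empty =>
    intro _
    refine ⟨fun v => absurd v.2 (Finset.notMem_empty _), ?_, ?_, ?_, ?_, ?_, ?_, ?_⟩
    · intro v; exact absurd v.2 (Finset.notMem_empty _)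
    · intro v; exact absurd v.2 (Finset.notMem_empty _)
    · intro v; exact absurd v.2 (Finset.notMem_empty _)
    · intro v; exact absurd v.2 (Finset.notMem_empty _)
    · intro v; exact absurd v.2 (Finset.notMem_empty _)
    · intro v; exact absurd v.2 (Finset.notMem_empty _)
    · intro v; exact absurd v.2 (Finset.notMem_empty _)
  | @insert a s ha ih =>
    intro hsub
    have hsub' : s ⊆ V := fun x hx => hsub (Finset.mem_insert_of_mem hx)
    have haV : a ∈ V := hsub (Finset.mem_insert_self a s)
    obtain ⟨f', hp1, hp2, hp3, hp4, hp5, hp6, hp7⟩ := ih hsub'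
    set verts : Finset G :=
      Finset.image (fun q : {x : G // x ∈ s} × ZMod k => f' q.1 q.2) Finset.univ with hvertsdef
    set cols : Finset G :=
      Finset.image (fun q : {x : G // x ∈ s} × ZMod k => f' q.1 q.2 - f' q.1 (q.2 + 1))
        Finset.univ with hcolsdef
    have hverts_mem : ∀ (w : {x : G // x ∈ s}) (i : ZMod k), f' w i ∈ verts := by
      intro w i
      rw [hvertsdef]
      exact Finset.mem_image.mpr ⟨(w, i), Finset.mem_univ _, rfl⟩
    have hcols_mem : ∀ (w : {x : G // x ∈ s}) (i : ZMod k),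
        f' w i - f' w (i + 1) ∈ cols := by
      intro w i
      rw [hcolsdef]
      exact Finset.mem_image.mpr ⟨(w, i), Finset.mem_univ _, rfl⟩
    have hcard_univ : (Finset.univ : Finset ({x : G // x ∈ s} × ZMod k)).card = s.card * k := by
      rw [Finset.card_univ, Fintype.card_prod, Fintype.card_coe, ZMod.card]
    have hverts_card : verts.card ≤ V.card * k := by
      calc verts.card ≤ (Finset.univ : Finset ({x : G // x ∈ s} × ZMod k)).card :=
            Finset.card_image_le
        _ = s.card * k := hcard_univ
        _ ≤ V.card * k := Nat.mul_le_mul_right k (Finset.card_le_card hsub')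
    have hcols_card : cols.card ≤ V.card * k := by
      calc cols.card ≤ (Finset.univ : Finset ({x : G // x ∈ s} × ZMod k)).card :=
            Finset.card_image_le
        _ = s.card * k := hcard_univ
        _ ≤ V.card * k := Nat.mul_le_mul_right k (Finset.card_le_card hsub')
    set Fv : Finset G := insert a (U ∪ V ∪ verts) with hFvdef
    set Fc : Finset G := U ∪ cols with hFcdef
    have hFvcard : (Fv.card : ℝ) ≤ (U.card : ℝ) + (V.card : ℝ) + (V.card : ℝ) * k + 1 := by
      have h1 : Fv.card ≤ U.card + V.card + verts.card + 1 := by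
        rw [hFvdef]
        calc (insert a (U ∪ V ∪ verts)).card ≤ (U ∪ V ∪ verts).card + 1 :=
              Finset.card_insert_le _ _
          _ ≤ (U ∪ V).card + verts.card + 1 := by
              have := Finset.card_union_le (U ∪ V) verts
              omega
          _ ≤ U.card + V.card + verts.card + 1 := by
              have := Finset.card_union_le U V
              omega
      have h2 : Fv.card ≤ U.card + V.card + V.card * k + 1 := by omega
      push_cast
      exact_mod_cast le_trans (Nat.cast_le.mpr h2) (by push_cast; linarith)
    have hFccard : (Fc.card : ℝ) ≤ (U.card : ℝ) + (V.card : ℝ) * k := by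
      have h1 : Fc.card ≤ U.card + cols.card := by
        rw [hFcdef]; exact Finset.card_union_le _ _
      have h2 : Fc.card ≤ U.card + V.card * k := by omega
      exact_mod_cast le_trans (Nat.cast_le.mpr h2) (by push_cast; linarith)
    have hbud' : (Fv.card : ℝ) + 2 * (Fc.card : ℝ) + 3 * k < θ := by linarith
    obtain ⟨y, hy0, hyinj, hyint, hycinj, hycol⟩ :=
      cycle_zmod h3 hn k hk a Fv Fc (Finset.mem_insert_self _ _) hbud'
    have hyU : ∀ i : ZMod k, i ≠ 0 → y i ∉ U := by
      intro i hi hmem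
      exact (hyint i hi).2 (by
        rw [hFvdef]
        exact Finset.mem_insert_of_mem (Finset.mem_union_left _ (Finset.mem_union_left _ hmem)))
    have hyV : ∀ i : ZMod k, i ≠ 0 → y i ∉ V := by
      intro i hi hmem
      exact (hyint i hi).2 (by
        rw [hFvdef]
        exact Finset.mem_insert_of_mem (Finset.mem_union_left _ (Finset.mem_union_right _ hmem)))
    have hyVert : ∀ i : ZMod k, i ≠ 0 → y i ∉ verts := by
      intro i hi hmem
      exact (hyint i hi).2 (by
        rw [hFvdef]
        exact Finset.mem_insert_of_mem (Finset.mem_union_right _ hmem))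
    have hy_vs_old : ∀ (i : ZMod k) (w : {x : G // x ∈ s}) (j : ZMod k), y i ≠ f' w j := by
      intro i w j
      by_cases hi : i = 0
      · subst hi
        rw [hy0]
        by_cases hj : j = 0
        · subst hj
          rw [hp1 w]
          exact fun h => ha (by rw [h]; exact w.2)
        · intro h
          exact (hp2 w j hj).2.2 (by rw [← h]; exact haV)
      · intro h
        exact hyVert i hi (by rw [h]; exact hverts_mem w j)
    have hc_vs_old : ∀ (i : ZMod k) (w : {x : G // x ∈ s}) (j : ZMod k),
        y i - y (i + 1) ≠ f' w j - f' w (j + 1) := by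
      intro i w j h
      apply (hycol i).2
      rw [hFcdef]
      apply Finset.mem_union_right
      rw [h]
      exact hcols_mem w j
    set f : {x : G // x ∈ insert a s} → ZMod k → G :=
      fun v => if h : (v : G) = a then y
        else f' ⟨v, (Finset.mem_insert.mp v.2).resolve_left h⟩ with hfdef
    have hfa : ∀ (v : {x : G // x ∈ insert a s}) (h : (v : G) = a), f v = y := by
      intro v h
      simp only [hfdef]
      exact dif_pos h
    have hfo : ∀ (v : {x : G // x ∈ insert a s}) (h : ¬ (v : G) = a),
        f v = f' ⟨v, (Finset.mem_insert.mp v.2).resolve_left h⟩ := by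
      intro v h
      simp only [hfdef]
      exact dif_neg h
    refine ⟨f, ?_, ?_, ?_, ?_, ?_, ?_, ?_⟩
    · intro v
      by_cases hva : (v : G) = a
      · rw [hfa v hva, hy0, hva]
      · rw [hfo v hva, hp1]
    · intro v i hi
      by_cases hva : (v : G) = a
      · rw [hfa v hva]
        exact ⟨(hyint i hi).1, hyU i hi, hyV i hi⟩
      · rw [hfo v hva]
        exact hp2 _ i hi
    · intro v
      by_cases hva : (v : G) = a
      · rw [hfa v hva]; exact hyinj
      · rw [hfo v hva]; exact hp3 _
    · intro v v' hvv' i i'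
      by_cases hva : (v : G) = a <;> by_cases hva' : (v' : G) = a
      · exact absurd (hva.trans hva'.symm) hvv'
      · rw [hfa v hva, hfo v' hva']
        exact hy_vs_old i _ i'
      · rw [hfo v hva, hfa v' hva']
        exact fun h => hy_vs_old i' _ i h.symm
      · rw [hfo v hva, hfo v' hva']
        exact hp4 _ _ hvv' i i'
    · intro v
      by_cases hva : (v : G) = a
      · rw [hfa v hva]; exact hycinj
      · rw [hfo v hva]; exact hp5 _
    · intro v i
      by_cases hva : (v : G) = a
      · rw [hfa v hva]
        refine ⟨(hycol i).1, fun hmem => (hycol i).2 ?_⟩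
        rw [hFcdef]
        exact Finset.mem_union_left _ hmem
      · rw [hfo v hva]
        exact hp6 _ i
    · intro v v' hvv' i i'
      by_cases hva : (v : G) = a <;> by_cases hva' : (v' : G) = a
      · exact absurd (hva.trans hva'.symm) hvv'
      · rw [hfa v hva, hfo v' hva']
        exact hc_vs_old i _ i'
      · rw [hfo v hva, hfa v' hva']
        exact fun h => hc_vs_old i' _ i h.symm
      · rw [hfo v hva, hfo v' hva']
        exact hp7 _ _ hvv' i i'

end Fam
section Analytic

lemma exp_poly (t : ℝ) (ht : 0 ≤ t) (j : ℕ) :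
    t ^ j / (Nat.factorial j : ℝ) ≤ Real.exp t := by
  have h := Real.sum_le_exp_of_nonneg ht (j + 1)
  have h2 : t ^ j / (Nat.factorial j : ℝ)
      ≤ ∑ i ∈ Finset.range (j + 1), t ^ i / (Nat.factorial i : ℝ) :=
    Finset.single_le_sum (f := fun i => t ^ i / (Nat.factorial i : ℝ))
      (fun i _ => by positivity) (Finset.mem_range.mpr (Nat.lt_succ_self j))
  linarith

lemma analyticA : ∃ N : ℕ, ∀ n : ℕ, N ≤ n → ∀ x : ℝ, x ≤ (Real.log n) ^ 10 →
    3 * x + 2 < Real.sqrt n / 20 := by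
  set K : ℝ := 20 * 2 ^ 11 * (Nat.factorial 11 : ℝ) with hK
  have hK0 : 0 < K := by rw [hK]; positivity
  set M : ℝ := max 2 (4 * K) with hM
  refine ⟨⌈Real.exp M⌉₊ + 1, ?_⟩
  intro n hn x hx
  have hnR : Real.exp M ≤ (n : ℝ) := by
    calc Real.exp M ≤ (⌈Real.exp M⌉₊ : ℝ) := Nat.le_ceil _
      _ ≤ (n : ℝ) := by exact_mod_cast le_trans (Nat.le_succ _) hn
  have hn0 : (0:ℝ) < n := lt_of_lt_of_le (Real.exp_pos M) hnR
  set L := Real.log n with hL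
  have hLM : M ≤ L := by
    rw [hL, ← Real.log_exp M]
    exact Real.log_le_log (Real.exp_pos M) hnR
  have hL2 : 2 ≤ L := le_trans (le_max_left _ _) hLM
  have hL4K : 4 * K ≤ L := le_trans (le_max_right _ _) hLM
  have hL0 : 0 ≤ L := by linarith
  have hsqrt : Real.sqrt n = Real.exp (L / 2) := by
    have h1 : Real.exp (L / 2) ^ 2 = (n:ℝ) := by
      rw [sq, ← Real.exp_add, show L / 2 + L / 2 = L by ring, hL, Real.exp_log hn0]
    rw [← h1, Real.sqrt_sq (Real.exp_nonneg _)]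
  have hexp : (L/2) ^ 11 / (Nat.factorial 11 : ℝ) ≤ Real.exp (L / 2) :=
    exp_poly (L/2) (by linarith) 11
  have hpow : (L/2) ^ 11 / (Nat.factorial 11 : ℝ)
      = L ^ 11 / (2 ^ 11 * (Nat.factorial 11 : ℝ)) := by
    rw [div_pow]
    ring
  have h20 : L ^ 11 / K ≤ Real.sqrt n / 20 := by
    rw [hsqrt]
    rw [hpow] at hexp
    have h201 : L ^ 11 / K = (L ^ 11 / (2 ^ 11 * (Nat.factorial 11 : ℝ))) / 20 := by
      rw [hK]; ring
    rw [h201]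
    linarith
  have hL10 : (0:ℝ) ≤ L ^ 10 := by positivity
  have hkey : 4 * L ^ 10 ≤ L ^ 11 / K := by
    rw [le_div_iff₀ hK0]
    calc 4 * L ^ 10 * K = (4 * K) * L ^ 10 := by ring
      _ ≤ L * L ^ 10 := mul_le_mul_of_nonneg_right hL4K hL10
      _ = L ^ 11 := by ring
  have h1024 : (2:ℝ) ^ 10 ≤ L ^ 10 := pow_le_pow_left₀ (by norm_num) hL2 10
  have hfin : 3 * x + 2 < 4 * L ^ 10 := by
    have : (1024 : ℝ) ≤ L ^ 10 := by norm_num at h1024 ⊢; linarith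
    linarith
  linarith

lemma analyticB (δ : ℝ) (hδ : 0 < δ) : ∃ N : ℕ, ∀ n : ℕ, N ≤ n → 1 ≤ n →
    (n : ℝ) ^ 2 * Real.exp (-(Real.sqrt n / 16)) ≤ δ := by
  set C : ℝ := 16 ^ 44 * (Nat.factorial 44 : ℝ) with hC
  have hC0 : (0:ℝ) < C := by rw [hC]; positivity
  refine ⟨⌈C / δ⌉₊ + 1, ?_⟩
  intro n hn hn1
  have hn0 : (0:ℝ) < n := by exact_mod_cast hn1
  have hn1R : (1:ℝ) ≤ n := by exact_mod_cast hn1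
  have hnC : C / δ ≤ (n:ℝ) := by
    calc C / δ ≤ (⌈C / δ⌉₊ : ℝ) := Nat.le_ceil _
      _ ≤ (n : ℝ) := by exact_mod_cast le_trans (Nat.le_succ _) hn
  have hs : Real.sqrt n ^ 44 = (n:ℝ) ^ 22 := by
    rw [show (44:ℕ) = 2 * 22 from rfl, pow_mul, Real.sq_sqrt (le_of_lt hn0)]
  have hexp : (Real.sqrt n / 16) ^ 44 / (Nat.factorial 44 : ℝ)
      ≤ Real.exp (Real.sqrt n / 16) := exp_poly _ (by positivity) 44
  rw [div_pow, hs] at hexp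
  have h1 : (n:ℝ) ^ 22 / C ≤ Real.exp (Real.sqrt n / 16) := by
    calc (n:ℝ) ^ 22 / C = (n:ℝ) ^ 22 / 16 ^ 44 / (Nat.factorial 44 : ℝ) := by
          rw [hC]; ring
      _ ≤ _ := hexp
  have hq0 : (0:ℝ) < (n:ℝ) ^ 22 / C := by positivity
  have h2 : Real.exp (-(Real.sqrt n / 16)) ≤ C / (n:ℝ) ^ 22 := by
    rw [Real.exp_neg]
    have h3 := one_div_le_one_div_of_le hq0 h1
    rw [one_div_div] at h3
    calc (Real.exp (Real.sqrt n / 16))⁻¹ = 1 / Real.exp (Real.sqrt n / 16) := by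
          rw [inv_eq_one_div]
      _ ≤ C / (n:ℝ) ^ 22 := h3
  have h4 : (n:ℝ) ^ 2 * Real.exp (-(Real.sqrt n / 16)) ≤ (n:ℝ) ^ 2 * (C / (n:ℝ) ^ 22) :=
    mul_le_mul_of_nonneg_left h2 (by positivity)
  have h5 : (n:ℝ) ^ 2 * (C / (n:ℝ) ^ 22) = C / (n:ℝ) ^ 20 := by
    field_simp
  have h6 : C / (n:ℝ) ^ 20 ≤ C / (n:ℝ) := by
    apply div_le_div_of_nonneg_left (le_of_lt hC0) hn0
    exact le_self_pow₀ hn1R (by norm_num)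
  have h7 : C / (n:ℝ) ≤ δ := by
    rw [div_le_iff₀ hn0]
    have := (div_le_iff₀ hδ).mp hnC
    linarith
  linarith

end Analytic

set_option maxHeartbeats 1000000 in
/-- Exhausting vertices: with high probability, (1) rainbow paths/cycles of any length
`2 ≤ k' ≤ k` between prescribed vertices can be found avoiding any small forbidden set
`U`, and (2) any small vertex set `V` can be saturated by vertex- and colour-disjoint
rainbow `k`-cycles, each using exactly one vertex of `V`. -/
theorem exhausting_vertices :
    ∃ C : ℝ, 0 < C ∧ ∀ δ : ℝ, 0 < δ → ∃ N : ℕ,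
      ∀ (G : Type) [AddCommGroup G] [Fintype G] [DecidableEq G], ∀ (k : ℕ) (p : ℝ),
      N ≤ Fintype.card G →
      3 ≤ k → (k : ℝ) ≤ (Real.log (Fintype.card G)) ^ 10 →
      (Fintype.card G : ℝ) ^ (-(1 : ℝ) / 700) ≤ p → p ≤ 1 →
      1 - δ ≤ ∑ R₁ : Finset G, ∑ R₂ : Finset G,
        (if ((∀ U : Finset G,
              ((U.card : ℝ) ≤ p ^ 300 * Fintype.card G / C) →
              ∀ u v : G, ∀ k' : ℕ, 2 ≤ k' → k' ≤ k →
              (u ≠ v → ∃ x : Fin (k' + 1) → G,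
                x 0 = u ∧ x (Fin.last k') = v ∧ Function.Injective x ∧
                (∀ i : Fin (k' + 1), i ≠ 0 → i ≠ Fin.last k' → x i ∈ R₁ \ U) ∧
                Function.Injective (fun i : Fin k' => x i.castSucc - x i.succ) ∧
                (∀ i : Fin k', x i.castSucc - x i.succ ∈ R₂ \ U)) ∧
              (u = v → 3 ≤ k' → ∃ y : ZMod k' → G,
                y 0 = v ∧ Function.Injective y ∧
                (∀ i : ZMod k', i ≠ 0 → y i ∈ R₁ \ U) ∧
                Function.Injective (fun i : ZMod k' => y i - y (i + 1)) ∧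
                (∀ i : ZMod k', y i - y (i + 1) ∈ R₂ \ U))) ∧
            (∀ U : Finset G,
              ((U.card : ℝ) ≤ p ^ 300 * Fintype.card G / (4 * C)) →
              ∀ V : Finset G,
              ((V.card : ℝ) ≤ p ^ 300 * Fintype.card G / (4 * k * C)) →
              ∃ f : {x : G // x ∈ V} → ZMod k → G,
                (∀ v, f v 0 = ↑v) ∧
                (∀ v, ∀ i : ZMod k, i ≠ 0 → f v i ∈ (R₁ \ U) \ V) ∧
                (∀ v, Function.Injective (f v)) ∧
                (∀ v v', v ≠ v' → ∀ i i', f v i ≠ f v' i') ∧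
                (∀ v, Function.Injective (fun i : ZMod k => f v i - f v (i + 1))) ∧
                (∀ v i, f v i - f v (i + 1) ∈ R₂ \ U) ∧
                (∀ v v', v ≠ v' → ∀ i i',
                  f v i - f v (i + 1) ≠ f v' i' - f v' (i' + 1))))
        then setProb G p R₁ * setProb G p R₂ else 0) := by
  classical
  refine ⟨400, by norm_num, ?_⟩
  intro δ hδ
  obtain ⟨N₁, hN₁⟩ := analyticA
  obtain ⟨N₂, hN₂⟩ := analyticB δ hδ
  refine ⟨max (max N₁ N₂) 3, ?_⟩
  intro G _ _ _ k p hcard hk3 hk10 hplow hp1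
  set n := Fintype.card G with hn
  have hn3 : 3 ≤ n := le_trans (le_max_right _ _) hcard
  have hnN₁ : N₁ ≤ n := le_trans (le_trans (le_max_left _ _) (le_max_left _ _)) hcard
  have hnN₂ : N₂ ≤ n := le_trans (le_trans (le_max_right _ _) (le_max_left _ _)) hcard
  have hn2 : 2 ≤ Fintype.card G := by rw [← hn]; omega
  have hn0 : (0:ℝ) < n := by exact_mod_cast (by omega : 0 < n)
  have hn1 : (1:ℝ) ≤ n := by exact_mod_cast (by omega : 1 ≤ n)
  have hp0 : 0 < p := lt_of_lt_of_le (Real.rpow_pos_of_pos hn0 _) hplow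
  have hp3n : (n:ℝ) ^ ((697:ℝ)/700) ≤ p ^ 3 * n := by
    have h1 : ((n:ℝ) ^ (-(1:ℝ)/700)) ^ (3:ℕ) ≤ p ^ 3 :=
      pow_le_pow_left₀ (le_of_lt (Real.rpow_pos_of_pos hn0 _)) hplow 3
    have h2 : ((n:ℝ) ^ (-(1:ℝ)/700)) ^ (3:ℕ) = (n:ℝ) ^ (-(3:ℝ)/700) := by
      rw [← Real.rpow_natCast ((n:ℝ) ^ (-(1:ℝ)/700)) 3, ← Real.rpow_mul (le_of_lt hn0)]
      norm_num
    have h4 : (n:ℝ) ^ (-(3:ℝ)/700) ≤ p ^ 3 := by rw [← h2]; exact h1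
    calc (n:ℝ) ^ ((697:ℝ)/700) = (n:ℝ) ^ (-(3:ℝ)/700) * (n:ℝ) ^ (1:ℝ) := by
          rw [← Real.rpow_add hn0]; norm_num
      _ = (n:ℝ) ^ (-(3:ℝ)/700) * (n:ℝ) := by rw [Real.rpow_one]
      _ ≤ p ^ 3 * (n:ℝ) := mul_le_mul_of_nonneg_right h4 (le_of_lt hn0)
  have hsq : Real.sqrt n ≤ (n:ℝ) ^ ((697:ℝ)/700) := by
    rw [Real.sqrt_eq_rpow]
    exact Real.rpow_le_rpow_of_exponent_le hn1 (by norm_num)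
  have hnumA : 3 * (k:ℝ) + 2 < p ^ 3 * n / 20 := by
    have hA := hN₁ n hnN₁ (k:ℝ) hk10
    have h20 : Real.sqrt n / 20 ≤ p ^ 3 * n / 20 := by
      have := le_trans hsq hp3n
      linarith
    linarith
  set θ := thr G p with hθ
  have hθdef : θ = p ^ 3 * (n:ℝ) / 16 := rfl
  have hpn0 : (0:ℝ) < p ^ 3 * n := by positivity
  have hp300 : p ^ 300 ≤ p ^ 3 :=
    pow_le_pow_of_le_one (le_of_lt hp0) hp1 (by norm_num)
  have hp300n : p ^ 300 * (n:ℝ) ≤ p ^ 3 * n :=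
    mul_le_mul_of_nonneg_right hp300 (le_of_lt hn0)
  have hsp : ∀ R : Finset G, 0 ≤ setProb G p R := by
    intro R
    unfold setProb
    exact mul_nonneg (pow_nonneg (le_of_lt hp0) _) (pow_nonneg (by linarith) _)
  have hδbound : (n:ℝ)^2 * Real.exp (-θ) ≤ δ := by
    have hB := hN₂ n hnN₂ (by omega)
    have hθge : Real.sqrt n / 16 ≤ θ := by
      rw [hθdef]
      have := le_trans hsq hp3n
      linarith
    have hmono : Real.exp (-θ) ≤ Real.exp (-(Real.sqrt n / 16)) := by
      apply Real.exp_le_exp.mpr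
      linarith
    have hn2' : (0:ℝ) ≤ (n:ℝ)^2 := by positivity
    nlinarith
  have hPG := prob_good (G := G) p (le_of_lt hp0) hp1
  calc 1 - δ ≤ 1 - (n:ℝ)^2 * Real.exp (-θ) := by linarith
    _ ≤ Ex p (fun ω : (G ⊕ G) → Bool =>
          if GoodR θ (toR1 ω) (toR2 ω) then (1:ℝ) else 0) := hPG
    _ = ∑ R₁ : Finset G, ∑ R₂ : Finset G, setProb G p R₁ * setProb G p R₂ *
          (if GoodR θ R₁ R₂ then (1:ℝ) else 0) :=
        (sum_pair_eq_Ex p (fun R₁ R₂ => if GoodR θ R₁ R₂ then (1:ℝ) else 0)).symm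
    _ ≤ _ := by
        apply Finset.sum_le_sum
        intro R₁ _
        apply Finset.sum_le_sum
        intro R₂ _
        by_cases hg : GoodR θ R₁ R₂
        · rw [if_pos hg, mul_one]
          split_ifs with hPROP
          · exact le_rfl
          · exfalso
            apply hPROP
            constructor
            · -- part (1)
              intro U hU u v k' hk'2 hk'k
              have hUr : (U.card : ℝ) ≤ p ^ 3 * n / 400 := by
                refine le_trans hU ?_
                linarith
              have hk'r : (k' : ℝ) ≤ (k : ℝ) := by exact_mod_cast hk'k
              constructor
              · intro huv
                have hc1 : ((insert u (insert v U)).card : ℝ) ≤ (U.card : ℝ) + 2 := by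
                  have h1 : (insert u (insert v U)).card ≤ (insert v U).card + 1 :=
                    Finset.card_insert_le _ _
                  have h2 : (insert v U).card ≤ U.card + 1 := Finset.card_insert_le _ _
                  exact_mod_cast by omega
                have hbud : ((insert u (insert v U)).card : ℝ) + 2 * (U.card : ℝ)
                    + 3 * k' < θ := by
                  rw [hθdef]
                  linarith
                obtain ⟨x, hx1, hx2, hx3, hx4, hx5, hx6⟩ :=
                  path_fin hg hn2 k' hk'2 u v huv (insert u (insert v U)) U
                    (Finset.mem_insert_self _ _)
                    (Finset.mem_insert_of_mem (Finset.mem_insert_self _ _)) hbud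
                refine ⟨x, hx1, hx2, hx3, ?_, hx5, ?_⟩
                · intro i hi0 hil
                  have h := hx4 i hi0 hil
                  rw [Finset.mem_sdiff]
                  exact ⟨h.1, fun hmem => h.2
                    (Finset.mem_insert_of_mem (Finset.mem_insert_of_mem hmem))⟩
                · intro i
                  rw [Finset.mem_sdiff]
                  exact hx6 i
              · intro huv hk'3
                subst huv
                have hc1 : ((insert u U).card : ℝ) ≤ (U.card : ℝ) + 1 := by
                  exact_mod_cast Finset.card_insert_le _ _
                have hbud : ((insert u U).card : ℝ) + 2 * (U.card : ℝ) + 3 * k' < θ := by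
                  rw [hθdef]
                  linarith
                obtain ⟨y, hy0, hyinj, hyint, hycinj, hycol⟩ :=
                  cycle_zmod hg hn2 k' hk'3 u (insert u U) U
                    (Finset.mem_insert_self _ _) hbud
                refine ⟨y, hy0, hyinj, ?_, hycinj, ?_⟩
                · intro i hi
                  have h := hyint i hi
                  rw [Finset.mem_sdiff]
                  exact ⟨h.1, fun hmem => h.2 (Finset.mem_insert_of_mem hmem)⟩
                · intro i
                  rw [Finset.mem_sdiff]
                  exact hycol i
            · -- part (2)
              intro U hU V hV
              have hk0 : (0:ℝ) < (k:ℝ) := by exact_mod_cast (by omega : 0 < k)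
              have hk1 : (1:ℝ) ≤ (k:ℝ) := by exact_mod_cast (by omega : 1 ≤ k)
              have hUr : (U.card : ℝ) ≤ p ^ 3 * n / 1600 := by
                have he : p ^ 300 * (n:ℝ) / (4 * 400) = p ^ 300 * n / 1600 := by norm_num
                rw [he] at hU
                linarith
              have hVr : (V.card : ℝ) * k ≤ p ^ 3 * n / 1600 := by
                have h1 : (V.card : ℝ) * k ≤ (p ^ 300 * n / (4 * k * 400)) * k :=
                  mul_le_mul_of_nonneg_right hV (le_of_lt hk0)
                have h2 : (p ^ 300 * (n:ℝ) / (4 * k * 400)) * k = p ^ 300 * n / 1600 := by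
                  field_simp
                  ring
                rw [h2] at h1
                linarith
              have hVr' : (V.card : ℝ) ≤ p ^ 3 * n / 1600 := by
                have hVk : (V.card : ℝ) ≤ (V.card : ℝ) * k :=
                  le_mul_of_one_le_right (by positivity) hk1
                linarith
              have hbud : ((U.card : ℝ) + (V.card : ℝ) + (V.card : ℝ) * k + 1)
                  + 2 * ((U.card : ℝ) + (V.card : ℝ) * k) + 3 * k < θ := by
                rw [hθdef]
                linarith
              obtain ⟨f, hq1, hq2, hq3, hq4, hq5, hq6, hq7⟩ :=
                family_lemma hg hn2 k hk3 U V hbud V (Finset.Subset.refl V)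
              refine ⟨f, hq1, ?_, hq3, ?_, hq5, ?_, ?_⟩
              · intro v i hi
                have h := hq2 v i hi
                rw [Finset.mem_sdiff, Finset.mem_sdiff]
                exact ⟨⟨h.1, h.2.1⟩, h.2.2⟩
              · intro v v' hvv' i i'
                exact hq4 v v' (fun h => hvv' (Subtype.ext h)) i i'
              · intro v i
                rw [Finset.mem_sdiff]
                exact hq6 v i
              · intro v v' hvv' i i'
                exact hq7 v v' (fun h => hvv' (Subtype.ext h)) i i'
        · rw [if_neg hg, mul_zero]
          split_ifs
          · exact mul_nonneg (hsp _) (hsp _)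
          · exact le_rfl
end

section
/- There is an absolute constant C such that for every δ > 0 there is N ∈ ℕ with the following property. Let G be a finite abelian group (written additively) of order n ≥ N, let k be an integer with k ≤ 50, let p be a real with n^{−1/700} ≤ p ≤ 1, and let R be a p-random subset of G. Then with probability at least 1 − δ the following holds. For every U ⊆ G with |U| ≤ p^{350}·n/C: (1) for every k-tuple (c₁,…,c_k) of elements of G that is a rainbow path-candidate, there exists v ∈ G such that the k+1 elements v, v−c₁, v−c₁−c₂, …, v−c₁−⋯−c_k are pairwise distinct and all lie in R ∖ U; (2) for every k-tuple (c₁,…,c_k) of elements of G that is a rainbow cycle-candidate, there exists v ∈ G such that the k elements v, v−c₁, v−c₁−c₂, …, v−c₁−⋯−c_{k−1} are pairwise distinct and all lie in R ∖ U (note v − c₁ − ⋯ − c_k = v, so these elements form a directed cycle with colour sequence (c₁,…,c_k)). -/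
open scoped Classical

/-- The partial sum `c₁ + ⋯ + cⱼ` of the first `j` entries of the tuple `c`. -/
def partialSum {G : Type} [AddCommGroup G] {k : ℕ} (c : Fin k → G) (j : ℕ) : G :=
  ∑ i ∈ Finset.univ.filter (fun i : Fin k => (i : ℕ) < j), c i

/-- `(c₁, …, c_k)` is a path-candidate if its `k+1` partial sums are pairwise distinct. -/
def IsPathCandidate {G : Type} [AddCommGroup G] {k : ℕ} (c : Fin k → G) : Prop :=
  ∀ j j', j ≤ k → j' ≤ k → j ≠ j' → partialSum c j ≠ partialSum c j'

/-- `(c₁, …, c_k)` is a cycle-candidate if `(c₁, …, c_{k-1})` is a path-candidate and the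
total sum is `0`. -/
def IsCycleCandidate {G : Type} [AddCommGroup G] {k : ℕ} (c : Fin k → G) : Prop :=
  (∀ j j', j ≤ k - 1 → j' ≤ k - 1 → j ≠ j' → partialSum c j ≠ partialSum c j') ∧
  partialSum c k = 0

noncomputable def pw {G : Type} [DecidableEq G] (p : ℝ) (A B : Finset G) : ℝ :=
  p ^ B.card * (1 - p) ^ (A.card - B.card)

lemma sum_pw {G : Type} [DecidableEq G] (p : ℝ) (A : Finset G) :
    ∑ B ∈ A.powerset, pw p A B = 1 := by
  have h := Finset.prod_add (fun _ : G => p) (fun _ : G => 1 - p) A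
  have e : p + (1 - p) = 1 := by ring
  rw [e] at h
  simp only [Finset.prod_const, one_pow] at h
  rw [h]
  apply Finset.sum_congr rfl
  intro B hB
  rw [Finset.mem_powerset] at hB
  rw [pw, Finset.card_sdiff_of_subset hB]

lemma sum_split {G : Type} [DecidableEq G] (p : ℝ) (A B : Finset G) (hAB : Disjoint A B)
    (F : Finset G → ℝ) :
    ∑ R ∈ (A ∪ B).powerset, pw p (A ∪ B) R * F R
      = ∑ R1 ∈ A.powerset, ∑ R2 ∈ B.powerset, pw p A R1 * pw p B R2 * F (R1 ∪ R2) := by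
  rw [← Finset.sum_product']
  refine Finset.sum_nbij' (fun R => (R ∩ A, R ∩ B)) (fun z => z.1 ∪ z.2) ?_ ?_ ?_ ?_ ?_
  · intro R hR
    simp only [Finset.mem_powerset] at hR ⊢
    exact Finset.mem_product.2 ⟨Finset.mem_powerset.2 Finset.inter_subset_right,
      Finset.mem_powerset.2 Finset.inter_subset_right⟩
  · intro z hz
    rw [Finset.mem_product] at hz
    simp only [Finset.mem_powerset] at hz ⊢
    exact Finset.union_subset_union hz.1 hz.2
  · intro R hR
    simp only [Finset.mem_powerset] at hR
    simp [← Finset.inter_union_distrib_left, Finset.inter_eq_left.2 hR]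
  · intro z hz
    rw [Finset.mem_product, Finset.mem_powerset, Finset.mem_powerset] at hz
    have hz2A : z.2 ∩ A = ∅ := by
      rw [← Finset.disjoint_iff_inter_eq_empty]; exact hAB.symm.mono_left hz.2
    have hz1B : z.1 ∩ B = ∅ := by
      rw [← Finset.disjoint_iff_inter_eq_empty]; exact hAB.mono_left hz.1
    have h1 : (z.1 ∪ z.2) ∩ A = z.1 := by
      rw [Finset.union_inter_distrib_right, Finset.inter_eq_left.2 hz.1, hz2A,
        Finset.union_empty]
    have h2 : (z.1 ∪ z.2) ∩ B = z.2 := by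
      rw [Finset.union_inter_distrib_right, Finset.inter_eq_left.2 hz.2, hz1B,
        Finset.empty_union]
    simp [h1, h2]
  · intro R hR
    simp only [Finset.mem_powerset] at hR
    have hdisj : Disjoint (R ∩ A) (R ∩ B) := hAB.mono Finset.inter_subset_right Finset.inter_subset_right
    have hre : R ∩ A ∪ R ∩ B = R := by
      rw [← Finset.inter_union_distrib_left, Finset.inter_eq_left.2 hR]
    have hcard : (R ∩ A).card + (R ∩ B).card = R.card := by
      rw [← Finset.card_union_of_disjoint hdisj, hre]
    have hA : (R ∩ A).card ≤ A.card := Finset.card_le_card Finset.inter_subset_right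
    have hB' : (R ∩ B).card ≤ B.card := Finset.card_le_card Finset.inter_subset_right
    have hcU : (A ∪ B).card = A.card + B.card := Finset.card_union_of_disjoint hAB
    rw [hre]
    simp only [pw, hcU, ← hcard]
    have hsub : A.card + B.card - ((R ∩ A).card + (R ∩ B).card)
        = (A.card - (R ∩ A).card) + (B.card - (R ∩ B).card) := by omega
    rw [hsub, pow_add, pow_add]
    ring

lemma sum_blocks {G : Type} [DecidableEq G] (p : ℝ) (V : Finset G) :
    ∀ (A : Finset G) (T : G → Finset G) (f : G → Finset G → ℝ),
    (∀ v ∈ V, T v ⊆ A) →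
    (∀ v ∈ V, ∀ v' ∈ V, v ≠ v' → Disjoint (T v) (T v')) →
    ∑ R ∈ A.powerset, pw p A R * ∏ v ∈ V, f v (R ∩ T v)
      = ∏ v ∈ V, ∑ B ∈ (T v).powerset, pw p (T v) B * f v B := by
  induction V using Finset.induction_on with
  | empty =>
    intro A T f _ _
    simpa using sum_pw p A
  | @insert a s ha ih =>
    intro A T f hsub hdisj
    have hTa : T a ⊆ A := hsub a (Finset.mem_insert_self a s)
    have hAeq : T a ∪ (A \ T a) = A := Finset.union_sdiff_of_subset hTa
    have hd : Disjoint (T a) (A \ T a) := Finset.disjoint_sdiff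
    rw [← hAeq, sum_split p _ _ hd]
    have hmain : ∀ R1 ∈ (T a).powerset, ∀ R2 ∈ (A \ T a).powerset,
        pw p (T a) R1 * pw p (A \ T a) R2 * ∏ v ∈ insert a s, f v ((R1 ∪ R2) ∩ T v)
        = (pw p (T a) R1 * f a R1) * (pw p (A \ T a) R2 * ∏ v ∈ s, f v (R2 ∩ T v)) := by
      intro R1 hR1 R2 hR2
      rw [Finset.mem_powerset] at hR1 hR2
      have h1 : (R1 ∪ R2) ∩ T a = R1 := by
        have : R2 ∩ T a = ∅ := by
          rw [← Finset.disjoint_iff_inter_eq_empty]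
          exact (hd.symm.mono_left hR2)
        rw [Finset.union_inter_distrib_right, Finset.inter_eq_left.2 hR1, this,
          Finset.union_empty]
      have h2 : ∀ v ∈ s, (R1 ∪ R2) ∩ T v = R2 ∩ T v := by
        intro v hv
        have hav : a ≠ v := fun h => ha (h ▸ hv)
        have : R1 ∩ T v = ∅ := by
          rw [← Finset.disjoint_iff_inter_eq_empty]
          exact ((hdisj a (Finset.mem_insert_self a s) v
            (Finset.mem_insert_of_mem hv) hav).mono_left hR1)
        rw [Finset.union_inter_distrib_right, this, Finset.empty_union]
      have h3 : ∏ x ∈ s, f x ((R1 ∪ R2) ∩ T x) = ∏ v ∈ s, f v (R2 ∩ T v) :=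
        Finset.prod_congr rfl (fun v hv => by rw [h2 v hv])
      rw [Finset.prod_insert ha, h1, h3]
      ring
    rw [Finset.sum_congr rfl (fun R1 hR1 => Finset.sum_congr rfl (fun R2 hR2 => hmain R1 hR1 R2 hR2))]
    rw [← Finset.sum_mul_sum]
    rw [Finset.prod_insert ha]
    congr 1
    apply ih (A \ T a) T f
    · intro v hv
      refine Finset.subset_sdiff.2 ⟨hsub v (Finset.mem_insert_of_mem hv), ?_⟩
      have hav : a ≠ v := fun h => ha (h ▸ hv)
      exact (hdisj a (Finset.mem_insert_self a s) v (Finset.mem_insert_of_mem hv) hav).symm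
    · intro v hv v' hv' hne
      exact hdisj v (Finset.mem_insert_of_mem hv) v' (Finset.mem_insert_of_mem hv') hne

lemma factor_eq {G : Type} [DecidableEq G] (p : ℝ) (W : Finset G) (s : ℕ) (hcard : W.card = s) :
    ∑ B ∈ W.powerset, pw p W B * (if W ⊆ B then (1/2:ℝ) else 1) = 1 - p ^ s / 2 := by
  have hTv : W ∈ W.powerset := Finset.mem_powerset_self _
  have hpwW : pw p W W = p ^ s := by
    rw [pw, hcard, Nat.sub_self, pow_zero, mul_one]
  have herase : ∑ B ∈ W.powerset.erase W, pw p W B * (if W ⊆ B then (1/2:ℝ) else 1)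
      = ∑ B ∈ W.powerset.erase W, pw p W B := by
    apply Finset.sum_congr rfl
    intro B hB
    rw [Finset.mem_erase, Finset.mem_powerset] at hB
    rw [if_neg (fun h => hB.1 (Finset.Subset.antisymm hB.2 h)), mul_one]
  have hsum : ∑ B ∈ W.powerset.erase W, pw p W B + pw p W W = 1 := by
    rw [Finset.sum_erase_add _ _ hTv, sum_pw]
  rw [← Finset.sum_erase_add _ _ hTv, herase, if_pos (Finset.Subset.refl W), hpwW]
  rw [hpwW] at hsum
  linarith

lemma mgf_eq {G : Type} [DecidableEq G] [Fintype G] (p : ℝ) (V : Finset G) (T : G → Finset G)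
    (s : ℕ) (hcard : ∀ v ∈ V, (T v).card = s)
    (hdisj : ∀ v ∈ V, ∀ v' ∈ V, v ≠ v' → Disjoint (T v) (T v')) :
    ∑ R ∈ (Finset.univ : Finset G).powerset, pw p Finset.univ R *
        (1/2 : ℝ) ^ (V.filter (fun v => T v ⊆ R)).card
      = (1 - p ^ s / 2) ^ V.card := by
  have key : ∀ R : Finset G, (1/2 : ℝ) ^ (V.filter (fun v => T v ⊆ R)).card
      = ∏ v ∈ V, (fun v B => if T v ⊆ B then (1/2:ℝ) else 1) v (R ∩ T v) := by
    intro R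
    have h1 : ∀ v ∈ V, (fun v B => if T v ⊆ B then (1/2:ℝ) else 1) v (R ∩ T v)
        = (if T v ⊆ R then (1/2:ℝ) else 1) := by
      intro v _
      simp only []
      congr 1
      · exact propext (by
          constructor
          · intro h; exact h.trans Finset.inter_subset_left
          · intro h; exact Finset.subset_inter h (Finset.Subset.refl _))
    rw [Finset.prod_congr rfl h1, Finset.prod_ite, Finset.prod_const, Finset.prod_const,
      one_pow, mul_one]
  rw [Finset.sum_congr rfl (fun R _ => by rw [key R])]
  have hb := sum_blocks p V Finset.univ T (fun v B => if T v ⊆ B then (1/2:ℝ) else 1)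
    (fun v _ => Finset.subset_univ _) hdisj
  rw [hb]
  rw [Finset.prod_congr rfl (fun v hv => factor_eq p (T v) s (hcard v hv))]
  exact Finset.prod_const _

lemma greedy {G : Type} [AddCommGroup G] [DecidableEq G] (D : Finset G)
    (hD : ∀ d ∈ D, -d ∈ D) (h0 : (0:G) ∈ D) (N : ℕ) :
    ∀ (A : Finset G), A.card ≤ N → ∃ V : Finset G, V ⊆ A ∧
      (∀ v ∈ V, ∀ v' ∈ V, v ≠ v' → v - v' ∉ D) ∧ A.card ≤ D.card * V.card := by
  induction N with
  | zero =>
    intro A hA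
    exact ⟨∅, Finset.empty_subset A, by simp, by simpa using hA⟩
  | succ n ih =>
    intro A hA
    rcases A.eq_empty_or_nonempty with hAe | ⟨a, haA⟩
    · exact ⟨∅, by simp [hAe], by simp, by simp [hAe]⟩
    · set B := D.image (fun d => a + d) with hB
      have haIm : a ∈ B := Finset.mem_image.2 ⟨0, h0, add_zero a⟩
      have hA'ss : A \ B ⊆ A := Finset.sdiff_subset
      have hnotmem : a ∉ A \ B := fun h => (Finset.mem_sdiff.1 h).2 haIm
      have hcard' : (A \ B).card ≤ n := by
        have h1 : A \ B ⊆ A.erase a :=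
          fun x hx => Finset.mem_erase.2 ⟨fun he => hnotmem (he ▸ hx), hA'ss hx⟩
        have h2 := Finset.card_le_card h1
        rw [Finset.card_erase_of_mem haA] at h2
        omega
      obtain ⟨V', hV'sub, hV'pair, hV'card⟩ := ih (A \ B) hcard'
      have hkey : ∀ v' ∈ V', v' - a ∉ D := by
        intro v' hv' hmem
        have : v' ∈ B := Finset.mem_image.2 ⟨v' - a, hmem, by abel⟩
        exact (Finset.mem_sdiff.1 (hV'sub hv')).2 this
      have haV' : a ∉ V' := fun h => hnotmem (hV'sub h)
      refine ⟨insert a V', Finset.insert_subset haA (hV'sub.trans hA'ss), ?_, ?_⟩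
      · intro v hv v' hv' hne
        rcases Finset.mem_insert.1 hv with rfl | hvm
        · rcases Finset.mem_insert.1 hv' with rfl | hvm'
          · exact absurd rfl hne
          · intro hmem
            exact hkey v' hvm' (by simpa [neg_sub] using hD _ hmem)
        · rcases Finset.mem_insert.1 hv' with heq | hvm'
          · subst heq
            exact hkey v hvm
          · exact hV'pair v hvm v' hvm' hne
      · rw [Finset.card_insert_of_notMem haV', Nat.mul_succ]
        have h3 : A.card ≤ (A \ B).card + B.card := Finset.card_le_card_sdiff_add_card
        have h4 : B.card ≤ D.card := Finset.card_image_le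
        omega

open Pointwise in
lemma main_prob {G : Type} [AddCommGroup G] [DecidableEq G] [Fintype G] (p : ℝ) (S : Finset G)
    (hS : S.Nonempty) (hS51 : S.card ≤ 51) (hp0 : 0 ≤ p) (hp1 : p ≤ 1) :
    ∑ R : Finset G, (if ((Finset.univ.filter
          (fun v => S.image (fun s => v - s) ⊆ R)).card : ℝ)
        ≤ 51 * (p ^ 350 * (Fintype.card G : ℝ) / 1000000) then setProb G p R else 0)
      ≤ Real.exp (-(p ^ 51 * (Fintype.card G : ℝ)) / 10404) := by
  set n := Fintype.card G with hn
  set t : ℝ := 51 * (p ^ 350 * (n : ℝ) / 1000000) with ht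
  have hp350 : (0:ℝ) ≤ p ^ 350 := pow_nonneg hp0 _
  have ht0 : 0 ≤ t := by
    rw [ht]
    apply mul_nonneg (by norm_num)
    exact div_nonneg (mul_nonneg hp350 (Nat.cast_nonneg n)) (by norm_num)
  set b := ⌊t⌋₊ with hb
  set T : G → Finset G := fun v => S.image (fun s => v - s) with hT
  have hTcard : ∀ v : G, (T v).card = S.card := fun v =>
    Finset.card_image_of_injective _ sub_right_injective
  set D : Finset G := S - S with hD
  have hDsymm : ∀ d ∈ D, -d ∈ D := by
    intro d hd
    rw [hD, Finset.mem_sub] at hd ⊢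
    obtain ⟨x, hx, y, hy, rfl⟩ := hd
    exact ⟨y, hy, x, hx, by abel⟩
  have hD0 : (0:G) ∈ D := by
    obtain ⟨x, hx⟩ := hS
    rw [hD, Finset.mem_sub]
    exact ⟨x, hx, x, hx, sub_self x⟩
  have hDcard : D.card ≤ 2601 := by
    have h1 : D.card ≤ S.card * S.card := by
      rw [hD, Finset.sub_def]
      calc ((S ×ˢ S).image fun p : G × G => p.1 - p.2).card ≤ (S ×ˢ S).card :=
          Finset.card_image_le
      _ = S.card * S.card := Finset.card_product S S
    calc D.card ≤ S.card * S.card := h1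
    _ ≤ 51 * 51 := Nat.mul_le_mul hS51 hS51
  obtain ⟨V, hVsub, hVpair, hVcard⟩ :=
    greedy D hDsymm hD0 (Finset.univ : Finset G).card Finset.univ le_rfl
  set m := V.card with hm
  have hnm : (n : ℝ) ≤ 2601 * m := by
    have h1 : n ≤ 2601 * m := by
      calc n = (Finset.univ : Finset G).card := (Finset.card_univ).symm
      _ ≤ D.card * m := hVcard
      _ ≤ 2601 * m := Nat.mul_le_mul_right m hDcard
    exact_mod_cast h1
  have hTdisj : ∀ v ∈ V, ∀ v' ∈ V, v ≠ v' → Disjoint (T v) (T v') := by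
    intro v hv v' hv' hne
    rw [Finset.disjoint_left]
    intro x hxv hxv'
    rw [hT] at hxv hxv'
    simp only [Finset.mem_image] at hxv hxv'
    obtain ⟨s1, hs1, rfl⟩ := hxv
    obtain ⟨s2, hs2, he⟩ := hxv'
    refine hVpair v hv v' hv' hne ?_
    rw [hD, Finset.mem_sub]
    have hss : s1 - s2 = v - v' := by
      have h2 : v - s1 = v' - s2 := he.symm
      calc s1 - s2 = v - (v - s1) - s2 := by abel
      _ = v - (v' - s2) - s2 := by rw [h2]
      _ = v - v' := by abel
    exact ⟨s1, hs1, s2, hs2, hss⟩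
  -- pointwise indicator bound
  have hmu0 : ∀ R : Finset G, 0 ≤ setProb G p R := by
    intro R
    exact mul_nonneg (pow_nonneg hp0 _) (pow_nonneg (by linarith) _)
  have hpoint : ∀ R : Finset G,
      (if ((Finset.univ.filter (fun v => T v ⊆ R)).card : ℝ) ≤ t then setProb G p R else 0)
      ≤ (2:ℝ) ^ b * ((1/2 : ℝ) ^ (V.filter (fun v => T v ⊆ R)).card * setProb G p R) := by
    intro R
    split_ifs with hcond
    · have hcU : (Finset.univ.filter (fun v => T v ⊆ R)).card ≤ b :=
        Nat.le_floor (by exact_mod_cast hcond)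
      have hcV : (V.filter (fun v => T v ⊆ R)).card ≤ b := by
        refine le_trans (Finset.card_le_card ?_) hcU
        exact Finset.filter_subset_filter _ (Finset.subset_univ V)
      have h12 : (1/2 : ℝ) ^ b ≤ (1/2 : ℝ) ^ (V.filter (fun v => T v ⊆ R)).card :=
        pow_le_pow_of_le_one (by norm_num) (by norm_num) hcV
      have h2b : (1:ℝ) ≤ (2:ℝ) ^ b * (1/2 : ℝ) ^ (V.filter (fun v => T v ⊆ R)).card := by
        calc (1:ℝ) = (2:ℝ) ^ b * (1/2:ℝ) ^ b := by
              rw [← mul_pow]; norm_num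
        _ ≤ _ := by
              apply mul_le_mul_of_nonneg_left h12 (by positivity)
      calc setProb G p R = 1 * setProb G p R := (one_mul _).symm
      _ ≤ ((2:ℝ) ^ b * (1/2 : ℝ) ^ (V.filter (fun v => T v ⊆ R)).card) * setProb G p R :=
          mul_le_mul_of_nonneg_right h2b (hmu0 R)
      _ = _ := by ring
    · exact mul_nonneg (by positivity) (mul_nonneg (by positivity) (hmu0 R))
  -- sum bound via mgf
  have hmgf : ∑ R : Finset G, (1/2 : ℝ) ^ (V.filter (fun v => T v ⊆ R)).card * setProb G p R
      = (1 - p ^ S.card / 2) ^ m := by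
    rw [← mgf_eq p V T S.card (fun v _ => hTcard v) hTdisj]
    rw [← Finset.powerset_univ]
    apply Finset.sum_congr rfl
    intro R _
    rw [mul_comm]
    simp only [setProb, pw, Finset.card_univ]
  have hsum : ∑ R : Finset G, (if ((Finset.univ.filter
        (fun v => T v ⊆ R)).card : ℝ) ≤ t then setProb G p R else 0)
      ≤ (2:ℝ) ^ b * (1 - p ^ S.card / 2) ^ m := by
    calc _ ≤ ∑ R : Finset G, (2:ℝ) ^ b *
          ((1/2 : ℝ) ^ (V.filter (fun v => T v ⊆ R)).card * setProb G p R) :=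
        Finset.sum_le_sum (fun R _ => hpoint R)
    _ = (2:ℝ) ^ b * ∑ R : Finset G, (1/2 : ℝ) ^ (V.filter (fun v => T v ⊆ R)).card
          * setProb G p R := by rw [← Finset.mul_sum]
    _ = _ := by rw [hmgf]
  refine le_trans hsum ?_
  -- numeric estimates
  have hq0 : (0:ℝ) ≤ p ^ 51 := pow_nonneg hp0 _
  have hqs : p ^ 51 ≤ p ^ S.card := pow_le_pow_of_le_one hp0 hp1 hS51
  have hqs1 : p ^ S.card ≤ 1 := pow_le_one₀ hp0 hp1
  have h2e : (2:ℝ) ^ b ≤ Real.exp b := by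
    calc (2:ℝ) ^ b ≤ (Real.exp 1) ^ b :=
        pow_le_pow_left₀ (by norm_num) (by linarith [Real.add_one_le_exp (1:ℝ)]) b
    _ = Real.exp b := by rw [← Real.exp_nat_mul]; ring_nf
  have hexp2 : (1 - p ^ S.card / 2) ^ m ≤ Real.exp (-(p ^ S.card / 2) * m) := by
    calc (1 - p ^ S.card / 2) ^ m ≤ (Real.exp (-(p ^ S.card / 2))) ^ m := by
          apply pow_le_pow_left₀ (by linarith)
          linarith [Real.add_one_le_exp (-(p ^ S.card / 2))]
    _ = Real.exp (-(p ^ S.card / 2) * m) := by rw [← Real.exp_nat_mul]; ring_nf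
  have hcomb : (2:ℝ) ^ b * (1 - p ^ S.card / 2) ^ m
      ≤ Real.exp ((b : ℝ) - p ^ 51 * m / 2) := by
    calc (2:ℝ) ^ b * (1 - p ^ S.card / 2) ^ m
        ≤ Real.exp b * Real.exp (-(p ^ S.card / 2) * m) := by
          apply mul_le_mul h2e hexp2 ?_ (Real.exp_nonneg _)
          apply pow_nonneg; linarith
    _ = Real.exp ((b:ℝ) + (-(p ^ S.card / 2) * m)) := (Real.exp_add _ _).symm
    _ ≤ Real.exp ((b : ℝ) - p ^ 51 * m / 2) := by
          apply Real.exp_le_exp.2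
          have : p ^ 51 * m ≤ p ^ S.card * m := by
            apply mul_le_mul_of_nonneg_right hqs (Nat.cast_nonneg m)
          linarith
  refine le_trans hcomb (Real.exp_le_exp.2 ?_)
  -- (b:ℝ) - p^51 m/2 ≤ -(p^51 n)/10404
  have hbt : (b : ℝ) ≤ t := Nat.floor_le ht0
  have hp350q : p ^ 350 ≤ p ^ 51 := pow_le_pow_of_le_one hp0 hp1 (by norm_num)
  have h1 : t ≤ 51 * (p ^ 51 * (2601 * m) / 1000000) := by
    rw [ht]
    have h2 : p ^ 350 * (n:ℝ) ≤ p ^ 51 * (2601 * m) := by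
      calc p ^ 350 * (n:ℝ) ≤ p ^ 51 * (n:ℝ) :=
          mul_le_mul_of_nonneg_right hp350q (Nat.cast_nonneg n)
      _ ≤ p ^ 51 * (2601 * m) := mul_le_mul_of_nonneg_left hnm hq0
    linarith
  have hqm : p ^ 51 * (n:ℝ) ≤ p ^ 51 * (2601 * m) := mul_le_mul_of_nonneg_left hnm hq0
  nlinarith [hbt, h1, hqm, hq0, mul_nonneg hq0 (Nat.cast_nonneg m)]

lemma exists_good {G : Type} [AddCommGroup G] [DecidableEq G] [Fintype G]
    (S U R : Finset G) (hS51 : S.card ≤ 51)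
    (hcount : 51 * U.card <
      (Finset.univ.filter (fun v => S.image (fun s => v - s) ⊆ R)).card) :
    ∃ v : G, S.image (fun s => v - s) ⊆ R \ U := by
  by_contra hno
  push_neg at hno
  have hsub : (Finset.univ.filter (fun v => S.image (fun s => v - s) ⊆ R))
      ⊆ U.biUnion (fun u => S.image (fun s => u + s)) := by
    intro v hv
    rw [Finset.mem_filter] at hv
    obtain ⟨-, hvR⟩ := hv
    obtain ⟨x, hx, hxnot⟩ := Finset.not_subset.1 (hno v)
    obtain ⟨s, hsS, rfl⟩ := Finset.mem_image.1 hx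
    have hxR : v - s ∈ R := hvR hx
    have hxU : v - s ∈ U := by
      by_contra h
      exact hxnot (Finset.mem_sdiff.2 ⟨hxR, h⟩)
    exact Finset.mem_biUnion.2 ⟨v - s, hxU, Finset.mem_image.2 ⟨s, hsS, by abel⟩⟩
  have h1 := Finset.card_le_card hsub
  have h2 := Finset.card_biUnion_le (s := U) (t := fun u => S.image (fun s => u + s))
  have h3 : ∑ u ∈ U, (S.image (fun s => u + s)).card ≤ ∑ u ∈ U, 51 :=
    Finset.sum_le_sum (fun u _ => le_trans Finset.card_image_le hS51)
  rw [Finset.sum_const, smul_eq_mul] at h3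
  omega

lemma eventually_small (δ : ℝ) (hδ : 0 < δ) : ∃ N : ℕ, ∀ n : ℕ, N ≤ n →
    2 * (n:ℝ) ^ (50:ℕ) * Real.exp (-(n:ℝ) ^ ((649:ℝ)/700) / 10404) ≤ δ := by
  set a : ℝ := (649:ℝ)/700 with ha
  have ha0 : 0 < a := by rw [ha]; norm_num
  have h1 : Filter.Tendsto (fun y : ℝ => 2 * (y ^ ((50:ℝ)/a) * Real.exp (-(1/10404) * y)))
      Filter.atTop (nhds 0) := by
    have := tendsto_rpow_mul_exp_neg_mul_atTop_nhds_zero ((50:ℝ)/a) (1/10404)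
      (by norm_num)
    have h2 := this.const_mul (2:ℝ)
    simpa using h2
  have h3 : Filter.Tendsto (fun x : ℝ => 2 * ((x ^ a) ^ ((50:ℝ)/a)
      * Real.exp (-(1/10404) * x ^ a))) Filter.atTop (nhds 0) :=
    h1.comp (tendsto_rpow_atTop ha0)
  have h4 : Filter.Tendsto (fun x : ℝ => 2 * x ^ (50:ℕ) * Real.exp (-x ^ a / 10404))
      Filter.atTop (nhds 0) := by
    apply h3.congr'
    filter_upwards [Filter.eventually_ge_atTop (0:ℝ)] with x hx
    have hxa : (x ^ a) ^ ((50:ℝ)/a) = x ^ (50:ℕ) := by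
      rw [← Real.rpow_natCast x 50, ← Real.rpow_mul hx]
      congr 1
      field_simp
      norm_num
    rw [hxa]
    ring_nf
  have h5 : Filter.Tendsto (fun n : ℕ => 2 * (n:ℝ) ^ (50:ℕ)
      * Real.exp (-(n:ℝ) ^ a / 10404)) Filter.atTop (nhds 0) :=
    h4.comp tendsto_natCast_atTop_atTop
  have h6 : ∀ᶠ n : ℕ in Filter.atTop,
      2 * (n:ℝ) ^ (50:ℕ) * Real.exp (-(n:ℝ) ^ a / 10404) < δ :=
    h5.eventually_lt_const hδ
  obtain ⟨N, hN⟩ := Filter.eventually_atTop.1 h6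
  exact ⟨N, fun n hn => (hN n hn).le⟩

/-- Finding paths and cycles with prescribed colour sequences inside random sets,
avoiding any small forbidden set. -/
theorem paths_and_cycles_with_prescribed_colours :
    ∃ C : ℝ, 0 < C ∧ ∀ δ : ℝ, 0 < δ → ∃ N : ℕ,
      ∀ (G : Type) [AddCommGroup G] [Fintype G] [DecidableEq G], ∀ (k : ℕ) (p : ℝ),
      N ≤ Fintype.card G →
      k ≤ 50 →
      (Fintype.card G : ℝ) ^ (-(1 : ℝ) / 700) ≤ p → p ≤ 1 →
      1 - δ ≤ ∑ R : Finset G,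
        (if (∀ U : Finset G,
              ((U.card : ℝ) ≤ p ^ 350 * Fintype.card G / C) →
              (∀ c : Fin k → G, Function.Injective c → IsPathCandidate c →
                ∃ v : G,
                  (∀ j, j ≤ k → v - partialSum c j ∈ R \ U) ∧
                  (∀ j j', j ≤ k → j' ≤ k → j ≠ j' →
                    v - partialSum c j ≠ v - partialSum c j')) ∧
              (∀ c : Fin k → G, Function.Injective c → IsCycleCandidate c →
                ∃ v : G,
                  (∀ j, j ≤ k - 1 → v - partialSum c j ∈ R \ U) ∧
                  (∀ j j', j ≤ k - 1 → j' ≤ k - 1 → j ≠ j' →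
                    v - partialSum c j ≠ v - partialSum c j')))
        then setProb G p R else 0) := by
  refine ⟨1000000, by norm_num, ?_⟩
  intro δ hδ
  obtain ⟨N0, hN0⟩ := eventually_small δ hδ
  refine ⟨max N0 1, ?_⟩
  intro G _ _ _ k p hNn hk hplow hp1
  set n := Fintype.card G with hn
  have hn1 : 1 ≤ n := le_trans (le_max_right N0 1) hNn
  have hnN0 : N0 ≤ n := le_trans (le_max_left N0 1) hNn
  have hnpos : (0:ℝ) < (n:ℝ) := by exact_mod_cast hn1
  have hp0 : 0 ≤ p := le_trans (Real.rpow_nonneg hnpos.le _) hplow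
  have hmu0 : ∀ R : Finset G, 0 ≤ setProb G p R := fun R =>
    mul_nonneg (pow_nonneg hp0 _) (pow_nonneg (by linarith) _)
  have htot : ∑ R : Finset G, setProb G p R = 1 := by
    rw [← sum_pw p (Finset.univ : Finset G), ← Finset.powerset_univ]
    apply Finset.sum_congr rfl
    intro R _
    simp only [setProb, pw, Finset.card_univ]
  -- the bad-count predicate for a pattern S
  set t : ℝ := p ^ 350 * (n:ℝ) / 1000000 with ht
  have ht0 : 0 ≤ t := by
    rw [ht]
    exact div_nonneg (mul_nonneg (pow_nonneg hp0 _) hnpos.le) (by norm_num)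
  -- pattern finsets
  set SP : (Fin k → G) → Finset G := fun c => (Finset.range (k+1)).image (partialSum c)
    with hSP
  set SC : (Fin k → G) → Finset G := fun c => (Finset.range (k-1+1)).image (partialSum c)
    with hSC
  have hSPcard : ∀ c, (SP c).card ≤ 51 := by
    intro c
    refine le_trans Finset.card_image_le ?_
    rw [Finset.card_range]; omega
  have hSCcard : ∀ c, (SC c).card ≤ 51 := by
    intro c
    refine le_trans Finset.card_image_le ?_
    rw [Finset.card_range]; omega
  have hSPne : ∀ c, (SP c).Nonempty := fun c =>
    (Finset.nonempty_range_iff.2 (Nat.succ_ne_zero k)).image _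
  have hSCne : ∀ c, (SC c).Nonempty := fun c =>
    (Finset.nonempty_range_iff.2 (Nat.succ_ne_zero _)).image _
  set P : Finset G → Prop := fun R => (∀ U : Finset G,
      ((U.card : ℝ) ≤ p ^ 350 * (n:ℝ) / 1000000) →
      (∀ c : Fin k → G, Function.Injective c → IsPathCandidate c →
        ∃ v : G,
          (∀ j, j ≤ k → v - partialSum c j ∈ R \ U) ∧
          (∀ j j', j ≤ k → j' ≤ k → j ≠ j' →
            v - partialSum c j ≠ v - partialSum c j')) ∧
      (∀ c : Fin k → G, Function.Injective c → IsCycleCandidate c →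
        ∃ v : G,
          (∀ j, j ≤ k - 1 → v - partialSum c j ∈ R \ U) ∧
          (∀ j j', j ≤ k - 1 → j' ≤ k - 1 → j ≠ j' →
            v - partialSum c j ≠ v - partialSum c j'))) with hPdef
  -- pointwise claim
  have hclaim : ∀ R : Finset G, ¬ P R →
      (∃ c : Fin k → G, ((Finset.univ.filter
          (fun v => (SP c).image (fun s => v - s) ⊆ R)).card : ℝ) ≤ 51 * t) ∨
      (∃ c : Fin k → G, ((Finset.univ.filter
          (fun v => (SC c).image (fun s => v - s) ⊆ R)).card : ℝ) ≤ 51 * t) := by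
    intro R hnot
    rw [hPdef, not_forall] at hnot
    obtain ⟨U, hU⟩ := hnot
    obtain ⟨hUcard, hUbad⟩ := _root_.not_imp.mp hU
    have hcnt : ∀ (S : Finset G), ¬ (((Finset.univ.filter
        (fun v => S.image (fun s => v - s) ⊆ R)).card : ℝ) ≤ 51 * t) → S.card ≤ 51 →
        ∃ v : G, S.image (fun s => v - s) ⊆ R \ U := by
      intro S hgt hS51
      push_neg at hgt
      have h51U : (51 * U.card : ℝ) < ((Finset.univ.filter
          (fun v => S.image (fun s => v - s) ⊆ R)).card : ℝ) := by
        have h1 : (51 * U.card : ℝ) ≤ 51 * t :=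
          mul_le_mul_of_nonneg_left hUcard (by norm_num)
        linarith
      exact exists_good S U R hS51 (by exact_mod_cast h51U)
    rcases not_and_or.mp hUbad with hA | hB
    · left
      rw [not_forall] at hA
      obtain ⟨c, hc⟩ := hA
      obtain ⟨hinj, hc2⟩ := _root_.not_imp.mp hc
      obtain ⟨hcand, hnoex⟩ := _root_.not_imp.mp hc2
      refine ⟨c, ?_⟩
      by_contra hgt
      obtain ⟨v, hv⟩ := hcnt (SP c) hgt (hSPcard c)
      apply hnoex
      refine ⟨v, ?_, ?_⟩
      · intro j hj
        apply hv
        exact Finset.mem_image.2 ⟨partialSum c j,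
          Finset.mem_image.2 ⟨j, Finset.mem_range.2 (Nat.lt_succ_of_le hj), rfl⟩, rfl⟩
      · intro j j' hj hj' hne heq
        exact hcand j j' hj hj' hne (sub_right_injective heq)
    · right
      rw [not_forall] at hB
      obtain ⟨c, hc⟩ := hB
      obtain ⟨hinj, hc2⟩ := _root_.not_imp.mp hc
      obtain ⟨hcand, hnoex⟩ := _root_.not_imp.mp hc2
      refine ⟨c, ?_⟩
      by_contra hgt
      obtain ⟨v, hv⟩ := hcnt (SC c) hgt (hSCcard c)
      apply hnoex
      refine ⟨v, ?_, ?_⟩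
      · intro j hj
        apply hv
        exact Finset.mem_image.2 ⟨partialSum c j,
          Finset.mem_image.2 ⟨j, Finset.mem_range.2 (Nat.lt_succ_of_le hj), rfl⟩, rfl⟩
      · intro j j' hj hj' hne heq
        exact hcand.1 j j' hj hj' hne (sub_right_injective heq)
  -- per-pattern probability bound
  set β : ℝ := Real.exp (-(p ^ 51 * (n:ℝ)) / 10404) with hβ
  have hmainP : ∀ (S : Finset G), S.Nonempty → S.card ≤ 51 →
      (∑ R : Finset G, if ((Finset.univ.filter
          (fun v => S.image (fun s => v - s) ⊆ R)).card : ℝ) ≤ 51 * t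
        then setProb G p R else 0) ≤ β := by
    intro S hne h51
    exact main_prob p S hne h51 hp0 hp1
  -- the bad-probability bound
  have key : ∑ R : Finset G, (if ¬ P R then setProb G p R else 0) ≤ δ := by
    have step1 : ∀ R : Finset G, (if ¬ P R then setProb G p R else 0) ≤
        (∑ c : Fin k → G, if ((Finset.univ.filter
            (fun v => (SP c).image (fun s => v - s) ⊆ R)).card : ℝ) ≤ 51 * t
          then setProb G p R else 0) +
        (∑ c : Fin k → G, if ((Finset.univ.filter
            (fun v => (SC c).image (fun s => v - s) ⊆ R)).card : ℝ) ≤ 51 * t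
          then setProb G p R else 0) := by
      intro R
      have hnonnegP : ∀ c : Fin k → G, 0 ≤ (if ((Finset.univ.filter
          (fun v => (SP c).image (fun s => v - s) ⊆ R)).card : ℝ) ≤ 51 * t
          then setProb G p R else 0) := by
        intro c; split_ifs; exacts [hmu0 R, le_refl 0]
      have hnonnegC : ∀ c : Fin k → G, 0 ≤ (if ((Finset.univ.filter
          (fun v => (SC c).image (fun s => v - s) ⊆ R)).card : ℝ) ≤ 51 * t
          then setProb G p R else 0) := by
        intro c; split_ifs; exacts [hmu0 R, le_refl 0]
      by_cases h : P R
      case pos =>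
        rw [if_neg (not_not_intro h)]
        exact add_nonneg (Finset.sum_nonneg (fun c' _ => hnonnegP c'))
          (Finset.sum_nonneg (fun c' _ => hnonnegC c'))
      case neg =>
        rw [if_pos h]
        rcases hclaim R h with ⟨c, hc⟩ | ⟨c, hc⟩
        · have h1 : (if ((Finset.univ.filter
              (fun v => (SP c).image (fun s => v - s) ⊆ R)).card : ℝ) ≤ 51 * t
              then setProb G p R else 0) ≤ ∑ c' : Fin k → G, (if ((Finset.univ.filter
              (fun v => (SP c').image (fun s => v - s) ⊆ R)).card : ℝ) ≤ 51 * t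
            then setProb G p R else 0) := Finset.single_le_sum
              (fun c' _ => hnonnegP c') (Finset.mem_univ c)
          rw [if_pos hc] at h1
          have h2 : 0 ≤ ∑ c' : Fin k → G, (if ((Finset.univ.filter
              (fun v => (SC c').image (fun s => v - s) ⊆ R)).card : ℝ) ≤ 51 * t
            then setProb G p R else 0) := Finset.sum_nonneg (fun c' _ => hnonnegC c')
          linarith
        · have h1 : (if ((Finset.univ.filter
              (fun v => (SC c).image (fun s => v - s) ⊆ R)).card : ℝ) ≤ 51 * t
              then setProb G p R else 0) ≤ ∑ c' : Fin k → G, (if ((Finset.univ.filter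
              (fun v => (SC c').image (fun s => v - s) ⊆ R)).card : ℝ) ≤ 51 * t
            then setProb G p R else 0) := Finset.single_le_sum
              (fun c' _ => hnonnegC c') (Finset.mem_univ c)
          rw [if_pos hc] at h1
          have h2 : 0 ≤ ∑ c' : Fin k → G, (if ((Finset.univ.filter
              (fun v => (SP c').image (fun s => v - s) ⊆ R)).card : ℝ) ≤ 51 * t
            then setProb G p R else 0) := Finset.sum_nonneg (fun c' _ => hnonnegP c')
          linarith
    have hcardfun : (Fintype.card (Fin k → G) : ℝ) ≤ (n:ℝ) ^ (50:ℕ) := by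
      rw [Fintype.card_fun, Fintype.card_fin]
      have : n ^ k ≤ n ^ 50 := Nat.pow_le_pow_right hn1 hk
      exact_mod_cast this
    have hβ0 : 0 ≤ β := Real.exp_nonneg _
    have hβbound : β ≤ Real.exp (-(n:ℝ) ^ ((649:ℝ)/700) / 10404) := by
      rw [hβ]
      apply Real.exp_le_exp.2
      have h51 : (n:ℝ) ^ (-(1:ℝ)/700 * 51) ≤ p ^ 51 := by
        have h1 := pow_le_pow_left₀ (Real.rpow_nonneg hnpos.le _) hplow 51
        rwa [← Real.rpow_natCast ((n:ℝ) ^ (-(1:ℝ)/700)) 51,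
          ← Real.rpow_mul hnpos.le] at h1
      have hmul : (n:ℝ) ^ ((649:ℝ)/700) ≤ p ^ 51 * (n:ℝ) := by
        have h2 : (n:ℝ) ^ (-(1:ℝ)/700 * 51) * (n:ℝ) ^ (1:ℝ) = (n:ℝ) ^ ((649:ℝ)/700) := by
          rw [← Real.rpow_add hnpos]
          norm_num
        rw [Real.rpow_one] at h2
        rw [← h2]
        exact mul_le_mul_of_nonneg_right h51 hnpos.le
      linarith
    calc ∑ R : Finset G, (if ¬ P R then setProb G p R else 0)
        ≤ ∑ R : Finset G, ((∑ c : Fin k → G, if ((Finset.univ.filter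
            (fun v => (SP c).image (fun s => v - s) ⊆ R)).card : ℝ) ≤ 51 * t
          then setProb G p R else 0) +
        (∑ c : Fin k → G, if ((Finset.univ.filter
            (fun v => (SC c).image (fun s => v - s) ⊆ R)).card : ℝ) ≤ 51 * t
          then setProb G p R else 0)) := Finset.sum_le_sum (fun R _ => step1 R)
      _ = (∑ c : Fin k → G, ∑ R : Finset G, if ((Finset.univ.filter
            (fun v => (SP c).image (fun s => v - s) ⊆ R)).card : ℝ) ≤ 51 * t
          then setProb G p R else 0) +
          (∑ c : Fin k → G, ∑ R : Finset G, if ((Finset.univ.filter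
            (fun v => (SC c).image (fun s => v - s) ⊆ R)).card : ℝ) ≤ 51 * t
          then setProb G p R else 0) := by
            rw [Finset.sum_add_distrib]
            congr 1
            · exact Finset.sum_comm
            · exact Finset.sum_comm
      _ ≤ (∑ _c : Fin k → G, β) + (∑ _c : Fin k → G, β) := by
            apply add_le_add
            · exact Finset.sum_le_sum (fun c _ => hmainP (SP c) (hSPne c) (hSPcard c))
            · exact Finset.sum_le_sum (fun c _ => hmainP (SC c) (hSCne c) (hSCcard c))
      _ = 2 * (Fintype.card (Fin k → G) : ℝ) * β := by
            rw [Finset.sum_const, Finset.card_univ, nsmul_eq_mul]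
            ring
      _ ≤ 2 * (n:ℝ) ^ (50:ℕ) * β := by
            apply mul_le_mul_of_nonneg_right ?_ hβ0
            linarith
      _ ≤ 2 * (n:ℝ) ^ (50:ℕ) * Real.exp (-(n:ℝ) ^ ((649:ℝ)/700) / 10404) := by
            apply mul_le_mul_of_nonneg_left hβbound
            positivity
      _ ≤ δ := hN0 n hnN0
  -- conclude
  have hfin : ∀ R : Finset G, (if P R then setProb G p R else 0)
      = setProb G p R - (if ¬ P R then setProb G p R else 0) := by
    intro R
    by_cases h : P R
    · rw [if_pos h, if_neg (not_not_intro h)]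
      ring
    · rw [if_neg h, if_pos h]
      ring
  calc 1 - δ ≤ 1 - ∑ R : Finset G, (if ¬ P R then setProb G p R else 0) := by linarith
    _ = ∑ R : Finset G, (if P R then setProb G p R else 0) := by
        rw [Finset.sum_congr rfl (fun R _ => hfin R), Finset.sum_sub_distrib, htot]
end
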